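/- arXiv:2412.00212 — 8 statements merged into one kernel-verified Lean document; each statement's English description precedes it below -/
import Mathlib

section
/- Every minimum-cost construction sequence is greedy: if x is a construction sequence for a finite simple graph G with ν(x) = ν_*(G), then for every edge e = uw of G and every vertex v ∉ {u,w}, either x⁻¹(v) < max{x⁻¹(u), x⁻¹(w)} or x⁻¹(v) > x⁻¹(e). -/
namespace ConsCost

variable {V : Type*} [Fintype V]

/-- The number of elements (vertices plus edges) of a graph. -/
noncomputable def numElts (G : SimpleGraph V) : ℕ :=
  Fintype.card V + Nat.card G.edgeSet

/-- `x` is a construction sequence for `G`: a bijective listing of the vertices and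
edges of `G` in which every edge appears after both of its endpoints. -/
def IsCSeq (G : SimpleGraph V) (x : Fin (numElts G) ≃ V ⊕ G.edgeSet) : Prop :=
  ∀ (e : G.edgeSet), ∀ v ∈ (e : Sym2 V), x.symm (Sum.inl v) < x.symm (Sum.inr e)

/-- The cost `ν(e,x) = (x⁻¹e − x⁻¹u) + (x⁻¹e − x⁻¹w)` of an edge `e = uw`
in the construction sequence `x`. -/
noncomputable def edgeCost (G : SimpleGraph V) (x : Fin (numElts G) ≃ V ⊕ G.edgeSet)
    (e : G.edgeSet) : ℕ :=
  2 * (x.symm (Sum.inr e) : ℕ) -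
    Sym2.lift ⟨fun u w => ((x.symm (Sum.inl u) : ℕ) + (x.symm (Sum.inl w) : ℕ)),
      fun u w => by dsimp only; omega⟩ (e : Sym2 V)

/-- The cost `ν(x)` of a construction sequence: the sum of the costs of all edges. -/
noncomputable def cost (G : SimpleGraph V) (x : Fin (numElts G) ≃ V ⊕ G.edgeSet) : ℕ :=
  ∑ᶠ e : G.edgeSet, edgeCost G x e

/-- The maximum construction cost `ν*(G)`. -/
noncomputable def maxCost (G : SimpleGraph V) : ℕ :=
  sSup {c | ∃ x, IsCSeq G x ∧ cost G x = c}

/-- The minimum construction cost `ν_*(G)`. -/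
noncomputable def minCost (G : SimpleGraph V) : ℕ :=
  sInf {c | ∃ x, IsCSeq G x ∧ cost G x = c}

private lemma sym2_exists {α : Type*} (s : Sym2 α) : ∃ a b, s = s(a, b) := by
  induction s using Sym2.ind with
  | _ a b => exact ⟨a, b, rfl⟩

private lemma edgeCost_mk (G : SimpleGraph V) (x : Fin (numElts G) ≃ V ⊕ G.edgeSet)
    (e : G.edgeSet) (u w : V) (h : (e : Sym2 V) = s(u, w)) :
    edgeCost G x e =
      2 * (x.symm (Sum.inr e) : ℕ) -
        ((x.symm (Sum.inl u) : ℕ) + (x.symm (Sum.inl w) : ℕ)) := by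
  unfold edgeCost
  rw [h, Sym2.lift_mk]

private lemma cost_eq_sum (G : SimpleGraph V) [Fintype G.edgeSet]
    (x : Fin (numElts G) ≃ V ⊕ G.edgeSet) :
    cost G x = ∑ e, edgeCost G x e :=
  finsum_eq_sum_of_fintype _

/-- Swapping a vertex `y` sitting immediately before an edge `e` (with `y` not an
endpoint of `e` and both endpoints of `e` before `y`) strictly decreases the cost. -/
private lemma swap_vertex {G : SimpleGraph V} {x : Fin (numElts G) ≃ V ⊕ G.edgeSet}
    (hx : IsCSeq G x) (e : G.edgeSet) (y : V)
    (hadj : (x.symm (Sum.inl y) : ℕ) + 1 = (x.symm (Sum.inr e) : ℕ))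
    (hy : y ∉ (e : Sym2 V))
    (hend : ∀ a ∈ (e : Sym2 V), x.symm (Sum.inl a) < x.symm (Sum.inl y)) :
    ∃ x', IsCSeq G x' ∧ cost G x' < cost G x := by
  classical
  set i := x.symm (Sum.inl y) with hi
  set j := x.symm (Sum.inr e) with hj
  have hs : ∀ z, ((Equiv.swap i j).trans x).symm z = Equiv.swap i j (x.symm z) := by
    intro z; simp [Equiv.symm_trans_apply]
  have hkv : ∀ a : V, a ≠ y →
      ((Equiv.swap i j).trans x).symm (Sum.inl a) = x.symm (Sum.inl a) := by
    intro a ha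
    rw [hs]
    refine Equiv.swap_apply_of_ne_of_ne ?_ ?_
    · intro h; rw [hi] at h
      exact ha (Sum.inl.inj (x.symm.injective h))
    · intro h; rw [hj] at h
      exact Sum.inl_ne_inr (x.symm.injective h)
  have hky : ((Equiv.swap i j).trans x).symm (Sum.inl y) = j := by
    rw [hs, ← hi, Equiv.swap_apply_left]
  have hke : ((Equiv.swap i j).trans x).symm (Sum.inr e) = i := by
    rw [hs, ← hj, Equiv.swap_apply_right]
  have hkf : ∀ f : G.edgeSet, f ≠ e →
      ((Equiv.swap i j).trans x).symm (Sum.inr f) = x.symm (Sum.inr f) := by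
    intro f hf
    rw [hs]
    refine Equiv.swap_apply_of_ne_of_ne ?_ ?_
    · intro h; rw [hi] at h
      exact Sum.inl_ne_inr (x.symm.injective h).symm
    · intro h; rw [hj] at h
      exact hf (Sum.inr.inj (x.symm.injective h))
  refine ⟨(Equiv.swap i j).trans x, ?_, ?_⟩
  · -- IsCSeq
    intro f a ha
    by_cases hf : f = e
    · subst hf
      have hay : a ≠ y := fun h => hy (h ▸ ha)
      rw [hkv a hay, hke]
      exact hend a ha
    · rw [hkf f hf]
      by_cases hay : a = y
      · subst hay
        rw [hky]
        have h1 := hx f a ha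
        rw [← hi] at h1
        have h2 : x.symm (Sum.inr f) ≠ j := by
          intro h; rw [hj] at h
          exact hf (Sum.inr.inj (x.symm.injective h))
        have h3 : (x.symm (Sum.inr f) : ℕ) ≠ (j : ℕ) := fun h => h2 (Fin.val_injective h)
        rw [Fin.lt_def] at h1 ⊢
        omega
      · rw [hkv a hay]
        exact hx f a ha
  · -- cost decreases
    letI : Fintype G.edgeSet := Fintype.ofFinite _
    rw [cost_eq_sum, cost_eq_sum]
    refine Finset.sum_lt_sum ?_ ⟨e, Finset.mem_univ e, ?_⟩
    · intro f _
      obtain ⟨a, b, hab⟩ := sym2_exists (f : Sym2 V)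
      rw [edgeCost_mk G _ f a b hab, edgeCost_mk G x f a b hab]
      have hamem : a ∈ (f : Sym2 V) := hab ▸ Sym2.mem_mk_left a b
      have hbmem : b ∈ (f : Sym2 V) := hab ▸ Sym2.mem_mk_right a b
      by_cases hf : f = e
      · subst hf
        have hay : a ≠ y := fun h => hy (h ▸ hamem)
        have hby : b ≠ y := fun h => hy (h ▸ hbmem)
        rw [hkv a hay, hkv b hby, hke, ← hj]
        omega
      · rw [hkf f hf]
        have hga : (x.symm (Sum.inl a) : ℕ) ≤
            (((Equiv.swap i j).trans x).symm (Sum.inl a) : ℕ) := by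
          by_cases hay : a = y
          · subst hay; rw [hky, ← hi]; omega
          · rw [hkv a hay]
        have hgb : (x.symm (Sum.inl b) : ℕ) ≤
            (((Equiv.swap i j).trans x).symm (Sum.inl b) : ℕ) := by
          by_cases hby : b = y
          · subst hby; rw [hky, ← hi]; omega
          · rw [hkv b hby]
        omega
    · obtain ⟨a, b, hab⟩ := sym2_exists (e : Sym2 V)
      rw [edgeCost_mk G _ e a b hab, edgeCost_mk G x e a b hab]
      have hamem : a ∈ (e : Sym2 V) := hab ▸ Sym2.mem_mk_left a b
      have hbmem : b ∈ (e : Sym2 V) := hab ▸ Sym2.mem_mk_right a b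
      have hay : a ≠ y := fun h => hy (h ▸ hamem)
      have hby : b ≠ y := fun h => hy (h ▸ hbmem)
      rw [hkv a hay, hkv b hby, hke, ← hj]
      have h1 := hend a hamem
      have h2 := hend b hbmem
      rw [Fin.lt_def] at h1 h2
      omega

/-- Swapping an edge `f` sitting immediately before an edge `e` (with the endpoints
of `e` strictly before the position of `f`) keeps the cost unchanged and moves no
vertex. -/
private lemma swap_edge {G : SimpleGraph V} {x : Fin (numElts G) ≃ V ⊕ G.edgeSet}
    (hx : IsCSeq G x) (e f : G.edgeSet) (hef : f ≠ e)
    (hadj : (x.symm (Sum.inr f) : ℕ) + 1 = (x.symm (Sum.inr e) : ℕ))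
    (hend : ∀ a ∈ (e : Sym2 V), ((x.symm (Sum.inl a) : ℕ)) + 1 < (x.symm (Sum.inr e) : ℕ)) :
    ∃ x', IsCSeq G x' ∧ cost G x' = cost G x ∧
      x'.symm (Sum.inr e) = x.symm (Sum.inr f) ∧
      (∀ a : V, x'.symm (Sum.inl a) = x.symm (Sum.inl a)) := by
  classical
  set i := x.symm (Sum.inr f) with hi
  set j := x.symm (Sum.inr e) with hj
  have hs : ∀ z, ((Equiv.swap i j).trans x).symm z = Equiv.swap i j (x.symm z) := by
    intro z; simp [Equiv.symm_trans_apply]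
  have hkv : ∀ a : V,
      ((Equiv.swap i j).trans x).symm (Sum.inl a) = x.symm (Sum.inl a) := by
    intro a
    rw [hs]
    refine Equiv.swap_apply_of_ne_of_ne ?_ ?_
    · intro h; rw [hi] at h
      exact Sum.inl_ne_inr (x.symm.injective h)
    · intro h; rw [hj] at h
      exact Sum.inl_ne_inr (x.symm.injective h)
  have hke : ((Equiv.swap i j).trans x).symm (Sum.inr e) = i := by
    rw [hs, ← hj, Equiv.swap_apply_right]
  have hkf : ((Equiv.swap i j).trans x).symm (Sum.inr f) = j := by
    rw [hs, ← hi, Equiv.swap_apply_left]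
  have hkg : ∀ g : G.edgeSet, g ≠ e → g ≠ f →
      ((Equiv.swap i j).trans x).symm (Sum.inr g) = x.symm (Sum.inr g) := by
    intro g hge hgf
    rw [hs]
    refine Equiv.swap_apply_of_ne_of_ne ?_ ?_
    · intro h; rw [hi] at h
      exact hgf (Sum.inr.inj (x.symm.injective h))
    · intro h; rw [hj] at h
      exact hge (Sum.inr.inj (x.symm.injective h))
  refine ⟨(Equiv.swap i j).trans x, ?_, ?_, hke, hkv⟩
  · -- IsCSeq
    intro g a ha
    rw [hkv a]
    by_cases hge : g = e
    · subst hge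
      rw [hke, Fin.lt_def]
      have := hend a ha
      omega
    · by_cases hgf : g = f
      · subst hgf
        rw [hkf, Fin.lt_def]
        have := hx g a ha
        rw [Fin.lt_def, ← hi] at this
        omega
      · rw [hkg g hge hgf]
        exact hx g a ha
  · -- cost unchanged
    letI : Fintype G.edgeSet := Fintype.ofFinite _
    rw [cost_eq_sum, cost_eq_sum]
    have hfe : e ∈ Finset.univ.erase f :=
      Finset.mem_erase.2 ⟨Ne.symm hef, Finset.mem_univ e⟩
    have key : ∀ c : G.edgeSet → ℕ,
        ∑ g, c g = c f + (c e + ∑ g ∈ (Finset.univ.erase f).erase e, c g) := by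
      intro c
      rw [Finset.add_sum_erase _ c hfe, Finset.add_sum_erase _ c (Finset.mem_univ f)]
    rw [key, key]
    have htail : ∑ g ∈ (Finset.univ.erase f).erase e, edgeCost G ((Equiv.swap i j).trans x) g =
        ∑ g ∈ (Finset.univ.erase f).erase e, edgeCost G x g := by
      refine Finset.sum_congr rfl ?_
      intro g hg
      have h1 := Finset.mem_erase.1 hg
      have h2 := Finset.mem_erase.1 h1.2
      obtain ⟨a, b, hab⟩ := sym2_exists (g : Sym2 V)
      rw [edgeCost_mk G _ g a b hab, edgeCost_mk G x g a b hab, hkg g h1.1 h2.1, hkv, hkv]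
    rw [htail]
    obtain ⟨a, b, hab⟩ := sym2_exists (e : Sym2 V)
    obtain ⟨c, d, hcd⟩ := sym2_exists (f : Sym2 V)
    rw [edgeCost_mk G _ e a b hab, edgeCost_mk G x e a b hab,
      edgeCost_mk G _ f c d hcd, edgeCost_mk G x f c d hcd,
      hke, hkf, hkv, hkv, hkv, hkv, ← hi, ← hj]
    have h1 := hend a (hab ▸ Sym2.mem_mk_left a b)
    have h2 := hend b (hab ▸ Sym2.mem_mk_right a b)
    have h3 := hx f c (hcd ▸ Sym2.mem_mk_left c d)
    have h4 := hx f d (hcd ▸ Sym2.mem_mk_right c d)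
    rw [Fin.lt_def, ← hi] at h3 h4
    omega

private lemma aux (G : SimpleGraph V) :
    ∀ k : ℕ, ∀ x : Fin (numElts G) ≃ V ⊕ G.edgeSet, IsCSeq G x → cost G x = minCost G →
    ∀ (e : G.edgeSet) (u w v : V), (e : Sym2 V) = s(u, w) →
    (x.symm (Sum.inr e) : ℕ) = k →
    (x.symm (Sum.inl u) : ℕ) < (x.symm (Sum.inl v) : ℕ) →
    (x.symm (Sum.inl w) : ℕ) < (x.symm (Sum.inl v) : ℕ) →
    (x.symm (Sum.inl v) : ℕ) < (x.symm (Sum.inr e) : ℕ) → False := by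
  intro k
  induction k using Nat.strong_induction_on with
  | _ k IH =>
    intro x hx hmin e u w v he hk hu hw hv
    set j := x.symm (Sum.inr e) with hj
    have hj1 : 1 ≤ (j : ℕ) := by omega
    have hilt : (j : ℕ) - 1 < numElts G := by
      have := j.isLt; omega
    set i : Fin (numElts G) := ⟨(j : ℕ) - 1, hilt⟩ with hidef
    have hij : (i : ℕ) + 1 = (j : ℕ) := by
      have : (i : ℕ) = (j : ℕ) - 1 := rfl
      omega
    have hmem : ∀ a ∈ (e : Sym2 V), (x.symm (Sum.inl a) : ℕ) < (i : ℕ) := by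
      intro a ha
      rw [he, Sym2.mem_iff] at ha
      rcases ha with rfl | rfl <;> omega
    cases hx0 : x i with
    | inl y =>
      have hiy : x.symm (Sum.inl y) = i := by rw [← hx0, Equiv.symm_apply_apply]
      have hyne : y ∉ (e : Sym2 V) := by
        intro hmemy
        have := hmem y hmemy
        rw [hiy] at this
        omega
      obtain ⟨x', hx', hlt⟩ := swap_vertex hx e y (by rw [hiy, ← hj]; omega) hyne
        (by intro a ha; rw [Fin.lt_def, hiy]; exact hmem a ha)
      have hle : minCost G ≤ cost G x' := Nat.sInf_le ⟨x', hx', rfl⟩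
      omega
    | inr f =>
      have hif : x.symm (Sum.inr f) = i := by rw [← hx0, Equiv.symm_apply_apply]
      have hfe : f ≠ e := by
        intro h; subst h
        have : (j : ℕ) = (i : ℕ) := by rw [hj, hif]
        omega
      obtain ⟨x', hx', hcost, hpe, hvert⟩ := swap_edge hx e f hfe (by rw [hif, ← hj]; omega)
        (by intro a ha; have := hmem a ha; rw [← hj]; omega)
      have hvi : (x.symm (Sum.inl v) : ℕ) ≠ (i : ℕ) := by
        intro h
        have h' : x.symm (Sum.inl v) = i := Fin.val_injective h
        rw [← hif] at h'
        exact Sum.inl_ne_inr (x.symm.injective h')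
      refine IH ((j : ℕ) - 1) (by omega) x' hx' (hcost.trans hmin) e u w v he ?_ ?_ ?_ ?_
      · rw [hpe, hif]
      · simp only [hvert]; exact hu
      · simp only [hvert]; exact hw
      · simp only [hvert]; rw [hpe, hif]; omega

/-- Every minimum-cost construction sequence is greedy. -/
theorem minCost_isGreedy {V : Type*} [Fintype V] (G : SimpleGraph V)
    (x : Fin (numElts G) ≃ V ⊕ G.edgeSet) (hx : IsCSeq G x)
    (hmin : cost G x = minCost G) :
    ∀ (e : G.edgeSet) (u w : V), (e : Sym2 V) = s(u, w) →
      ∀ v : V, v ∉ ({u, w} : Set V) →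
        x.symm (Sum.inl v) < max (x.symm (Sum.inl u)) (x.symm (Sum.inl w)) ∨
          x.symm (Sum.inr e) < x.symm (Sum.inl v) := by
  intro e u w he v hv
  simp only [Set.mem_insert_iff, Set.mem_singleton_iff, not_or] at hv
  obtain ⟨hvu, hvw⟩ := hv
  by_contra hcon
  push_neg at hcon
  obtain ⟨h1, h2⟩ := hcon
  have hvu' : x.symm (Sum.inl v) ≠ x.symm (Sum.inl u) := fun h =>
    hvu (Sum.inl.inj (x.symm.injective h))
  have hvw' : x.symm (Sum.inl v) ≠ x.symm (Sum.inl w) := fun h =>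
    hvw (Sum.inl.inj (x.symm.injective h))
  have hve : x.symm (Sum.inl v) ≠ x.symm (Sum.inr e) := fun h =>
    Sum.inl_ne_inr (x.symm.injective h)
  have hu1 : x.symm (Sum.inl u) ≤ x.symm (Sum.inl v) :=
    le_trans (le_max_left _ _) h1
  have hw1 : x.symm (Sum.inl w) ≤ x.symm (Sum.inl v) :=
    le_trans (le_max_right _ _) h1
  refine aux G (x.symm (Sum.inr e) : ℕ) x hx hmin e u w v he rfl ?_ ?_ ?_
  · exact Fin.lt_def.1 (lt_of_le_of_ne hu1 (Ne.symm hvu'))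
  · exact Fin.lt_def.1 (lt_of_le_of_ne hw1 (Ne.symm hvw'))
  · exact Fin.lt_def.1 (lt_of_le_of_ne h2 hve)
end ConsCost
end

section
/- Every maximum-cost construction sequence is easy: if x is a construction sequence for a finite simple graph G with ν(x) = ν*(G), then every vertex of G precedes every edge of G in x, i.e. x⁻¹(v) < x⁻¹(e) for all vertices v and edges e. -/
namespace ConsCost

variable {V : Type*} [Fintype V]

/-- Every maximum-cost construction sequence is easy: every vertex precedes every edge. -/
theorem maxCost_isEasy {V : Type*} [Fintype V] (G : SimpleGraph V)
    (x : Fin (numElts G) ≃ V ⊕ G.edgeSet) (hx : IsCSeq G x)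
    (hmax : cost G x = maxCost G) :
    ∀ (v : V) (e : G.edgeSet), x.symm (Sum.inl v) < x.symm (Sum.inr e) := by
  classical
  by_contra hcon
  push_neg at hcon
  obtain ⟨v, e, hve⟩ := hcon
  have hne : x.symm (Sum.inr e) ≠ x.symm (Sum.inl v) := by
    intro h
    have := x.symm.injective h
    simp at this
  have hlt : x.symm (Sum.inr e) < x.symm (Sum.inl v) :=
    lt_of_le_of_ne hve hne
  set b := x.symm (Sum.inl v) with hb
  -- the set of positions of edges before b
  set S : Finset (Fin (numElts G)) :=
    Finset.univ.filter (fun k => (∃ e', x k = Sum.inr e') ∧ k < b) with hS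
  have hSne : S.Nonempty := by
    refine ⟨x.symm (Sum.inr e), ?_⟩
    simp only [hS, Finset.mem_filter, Finset.mem_univ, true_and]
    exact ⟨⟨e, x.apply_symm_apply _⟩, hlt⟩
  set i := S.max' hSne with hi
  have hiS : i ∈ S := S.max'_mem hSne
  simp only [hS, Finset.mem_filter, Finset.mem_univ, true_and] at hiS
  obtain ⟨⟨e0, hxi⟩, hib⟩ := hiS
  have hjlt : (i : ℕ) + 1 < numElts G := lt_of_le_of_lt hib b.isLt
  set j : Fin (numElts G) := ⟨(i : ℕ) + 1, hjlt⟩ with hj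
  have hij : i < j := by simp [hj, Fin.lt_def]
  -- x j is a vertex
  have hxj : ∃ v0, x j = Sum.inl v0 := by
    rcases hxx : x j with v0 | e'
    · exact ⟨v0, rfl⟩
    · exfalso
      have hjb : j ≠ b := by
        intro h
        rw [h] at hxx
        rw [hb] at hxx
        simp [x.apply_symm_apply] at hxx
      have hjltb : j < b := lt_of_le_of_ne (by exact hib) hjb
      have hjS : j ∈ S := by
        simp only [hS, Finset.mem_filter, Finset.mem_univ, true_and]
        exact ⟨⟨e', hxx⟩, hjltb⟩
      exact absurd (S.le_max' j hjS) (not_le.mpr hij)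
  obtain ⟨v0, hxjv⟩ := hxj
  set σ : Equiv.Perm (Fin (numElts G)) := Equiv.swap i j with hσ
  set x' : Fin (numElts G) ≃ V ⊕ G.edgeSet := σ.trans x with hx'def
  have hsymm : ∀ a, x'.symm a = σ (x.symm a) := by
    intro a
    simp [hx'def, hσ, Equiv.symm_trans_apply, Equiv.symm_swap]
  have pe : x.symm (Sum.inr e0) = i := by
    rw [Equiv.symm_apply_eq]; exact hxi.symm
  have pv0 : x.symm (Sum.inl v0) = j := by
    rw [Equiv.symm_apply_eq]; exact hxjv.symm
  have hEnej : ∀ e' : G.edgeSet, x.symm (Sum.inr e') ≠ j := by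
    intro e' h
    have : x j = Sum.inr e' := by rw [← h, x.apply_symm_apply]
    rw [hxjv] at this; simp at this
  have hVnei : ∀ u : V, x.symm (Sum.inl u) ≠ i := by
    intro u h
    have : x i = Sum.inl u := by rw [← h, x.apply_symm_apply]
    rw [hxi] at this; simp at this
  -- position comparisons
  have hV : ∀ u : V, (x'.symm (Sum.inl u) : ℕ) ≤ (x.symm (Sum.inl u) : ℕ) := by
    intro u
    rw [hsymm]
    rcases eq_or_ne (x.symm (Sum.inl u)) j with h | h
    · rw [h, hσ, Equiv.swap_apply_right, hj]
      simp
    · rw [hσ, Equiv.swap_apply_of_ne_of_ne (hVnei u) h]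
  have hE : ∀ e' : G.edgeSet, (x.symm (Sum.inr e') : ℕ) ≤ (x'.symm (Sum.inr e') : ℕ) := by
    intro e'
    rw [hsymm]
    rcases eq_or_ne (x.symm (Sum.inr e')) i with h | h
    · rw [h, hσ, Equiv.swap_apply_left, hj]
      simp
    · rw [hσ, Equiv.swap_apply_of_ne_of_ne h (hEnej e')]
  have hE0 : x'.symm (Sum.inr e0) = j := by
    rw [hsymm, pe, hσ, Equiv.swap_apply_left]
  -- x' is a construction sequence
  have hx' : IsCSeq G x' := by
    intro e' u hu
    have h := hx e' u hu
    rw [hsymm, hsymm]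
    rcases eq_or_ne (x.symm (Sum.inr e')) i with hc | hc
    · have haj : x.symm (Sum.inl u) ≠ j := by
        intro h'
        rw [h', hc] at h
        exact absurd h (not_lt.mpr hij.le)
      rw [hc, hσ, Equiv.swap_apply_left, Equiv.swap_apply_of_ne_of_ne (hVnei u) haj]
      exact h.trans (hc ▸ hij)
    · rw [hσ, Equiv.swap_apply_of_ne_of_ne hc (hEnej e')]
      rcases eq_or_ne (x.symm (Sum.inl u)) j with ha | ha
      · rw [ha, Equiv.swap_apply_right]
        exact hij.trans (ha ▸ h)
      · rw [Equiv.swap_apply_of_ne_of_ne (hVnei u) ha]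
        exact h
  -- edge costs do not decrease
  have hEC : ∀ e' : G.edgeSet, edgeCost G x e' ≤ edgeCost G x' e' := by
    intro e'
    obtain ⟨⟨u, w⟩, hrep⟩ := Quot.exists_rep (e' : Sym2 V)
    have hrep' : (e' : Sym2 V) = s(u, w) := hrep.symm
    have h1 := hE e'
    have h2 := hV u
    have h3 := hV w
    unfold edgeCost
    simp only [hrep', Sym2.lift_mk]

    omega
  -- the cost of e0 strictly increases
  have hlt0 : edgeCost G x e0 < edgeCost G x' e0 := by
    obtain ⟨⟨u, w⟩, hrep⟩ := Quot.exists_rep (e0 : Sym2 V)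
    have hrep' : (e0 : Sym2 V) = s(u, w) := hrep.symm
    have hu : x.symm (Sum.inl u) < i := by
      have := hx e0 u (by rw [hrep']; simp)
      rwa [pe] at this
    have hw : x.symm (Sum.inl w) < i := by
      have := hx e0 w (by rw [hrep']; simp)
      rwa [pe] at this
    have hui : (x.symm (Sum.inl u) : ℕ) < (i : ℕ) := hu
    have hwi : (x.symm (Sum.inl w) : ℕ) < (i : ℕ) := hw
    have h2 := hV u
    have h3 := hV w
    unfold edgeCost
    simp only [hrep', Sym2.lift_mk]

    rw [pe, hE0]
    have hji : (j : ℕ) = (i : ℕ) + 1 := rfl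
    omega
  -- total cost strictly increases
  haveI : Fintype G.edgeSet := Fintype.ofFinite _
  have hcost : cost G x < cost G x' := by
    unfold cost
    rw [finsum_eq_sum_of_fintype, finsum_eq_sum_of_fintype]
    exact Finset.sum_lt_sum (fun e' _ => hEC e') ⟨e0, Finset.mem_univ _, hlt0⟩
  have hmem : cost G x' ∈ {c | ∃ y, IsCSeq G y ∧ cost G y = c} := ⟨x', hx', rfl⟩
  have hbdd : BddAbove {c | ∃ y, IsCSeq G y ∧ cost G y = c} := by
    apply Set.Finite.bddAbove
    apply Set.Finite.subset (Set.finite_range (cost G))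
    rintro c ⟨y, -, rfl⟩
    exact ⟨y, rfl⟩
  have hle : cost G x' ≤ maxCost G := le_csSup hbdd hmem
  rw [← hmax] at hle
  exact absurd hcost (not_lt.mpr hle)

end ConsCost
end

section
/- A maximum-cost construction sequence places vertices in non-increasing order of degree: if x is a construction sequence for a finite simple graph G with ν(x) = ν*(G), then for any two vertices u, v of G with x⁻¹(u) < x⁻¹(v), one has deg(u) ≥ deg(v). -/
namespace ConsCost

variable {V : Type*} [Fintype V]

open Classical in
lemma sum_ind (G : SimpleGraph V) [DecidableRel G.Adj] [Fintype G.edgeSet] (u : V) :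
    ∑ e : G.edgeSet, (if u ∈ (e : Sym2 V) then (1:ℤ) else 0) = G.degree u := by
  classical
  rw [Finset.sum_boole]
  norm_cast
  rw [← Fintype.card_subtype]
  have h1 : Fintype.card {e : G.edgeSet // u ∈ (e : Sym2 V)} = Fintype.card (G.incidenceSet u) := by
    apply Fintype.card_congr
    refine ⟨fun p => ⟨p.1.1, p.1.2, p.2⟩, fun p => ⟨⟨p.1, p.2.1⟩, p.2.2⟩, fun _ => rfl, fun _ => rfl⟩
  rw [h1, SimpleGraph.card_incidenceSet_eq_degree]

open Classical in
lemma sum_lift (G : SimpleGraph V) [DecidableRel G.Adj] [Fintype G.edgeSet] (g : V → ℤ) (u v : V) (huv : u ≠ v)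
    (hg : ∀ w, w ≠ u → w ≠ v → g w = 0) :
    ∑ e : G.edgeSet, Sym2.lift ⟨fun a b => g a + g b, by intros; ring⟩ (e : Sym2 V)
      = G.degree u * g u + G.degree v * g v := by
  classical
  have key : ∀ e : G.edgeSet, Sym2.lift ⟨fun a b => g a + g b, by intros; ring⟩ (e : Sym2 V)
      = (if u ∈ (e : Sym2 V) then (1:ℤ) else 0) * g u
        + (if v ∈ (e : Sym2 V) then (1:ℤ) else 0) * g v := by
    rintro ⟨E, hE⟩
    induction E using Sym2.ind with
    | _ a b =>
      simp only [Sym2.lift_mk, Sym2.mem_iff]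
      have hab : a ≠ b := (G.mem_edgeSet.mp hE).ne
      by_cases hau : a = u <;> by_cases hav : a = v <;> by_cases hbu : b = u <;>
        by_cases hbv : b = v <;>
        simp_all [hg, eq_comm, hg a, hg b] <;>
        first
          | ring
          | (rw [hg a hau hav, hg b hbu hbv]; ring)
          | (intros; first | exact hg v (Ne.symm huv) (by rfl) | simp_all [hg])
  rw [Finset.sum_congr rfl (fun e _ => key e), Finset.sum_add_distrib, ← Finset.sum_mul,
    ← Finset.sum_mul, sum_ind, sum_ind]



lemma edgeCost_cast (G : SimpleGraph V) (x : Fin (numElts G) ≃ V ⊕ G.edgeSet)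
    (hx : IsCSeq G x) (e : G.edgeSet) :
    (edgeCost G x e : ℤ) = 2 * ((x.symm (Sum.inr e) : ℕ) : ℤ) -
      Sym2.lift ⟨fun a b => (((x.symm (Sum.inl a) : ℕ) : ℤ) + ((x.symm (Sum.inl b) : ℕ) : ℤ)),
        by intros; ring⟩ (e : Sym2 V) := by
  obtain ⟨a, b, hab⟩ := Sym2.exists.mp ⟨(e : Sym2 V), rfl⟩
  have ha : a ∈ (e : Sym2 V) := by rw [hab]; exact Sym2.mem_mk_left a b
  have hb : b ∈ (e : Sym2 V) := by rw [hab]; exact Sym2.mem_mk_right a b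
  have h1 : (x.symm (Sum.inl a) : ℕ) < (x.symm (Sum.inr e) : ℕ) := hx e a ha
  have h2 : (x.symm (Sum.inl b) : ℕ) < (x.symm (Sum.inr e) : ℕ) := hx e b hb
  rw [edgeCost, hab]
  simp only [Sym2.lift_mk]
  have hle : (x.symm (Sum.inl a) : ℕ) + (x.symm (Sum.inl b) : ℕ)
      ≤ 2 * (x.symm (Sum.inr e) : ℕ) := by omega
  push_cast [Nat.cast_sub hle]
  ring

lemma cost_lt (G : SimpleGraph V) [DecidableRel G.Adj] [Fintype G.edgeSet]
    (x y : Fin (numElts G) ≃ V ⊕ G.edgeSet) (hx : IsCSeq G x) (hy : IsCSeq G y) (u v : V)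
    (hpuv : (x.symm (Sum.inl u) : ℕ) < (x.symm (Sum.inl v) : ℕ))
    (hdeg : G.degree u < G.degree v)
    (hw : ∀ w : V, w ≠ u → w ≠ v → (y.symm (Sum.inl w) : ℕ) = (x.symm (Sum.inl w) : ℕ))
    (hv2 : (y.symm (Sum.inl v) : ℕ) = (x.symm (Sum.inl u) : ℕ))
    (hqle : (y.symm (Sum.inl u) : ℕ) ≤ (x.symm (Sum.inl v) : ℕ))
    (hΔ : (((x.symm (Sum.inl v) : ℕ) : ℤ) - ((y.symm (Sum.inl u) : ℕ) : ℤ))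
        ≤ ∑ e : G.edgeSet, (((y.symm (Sum.inr e) : ℕ) : ℤ) - ((x.symm (Sum.inr e) : ℕ) : ℤ))) :
    cost G x < cost G y := by
  classical
  have huv : u ≠ v := by
    intro h; subst h; exact lt_irrefl _ hpuv
  set pu : ℤ := ((x.symm (Sum.inl u) : ℕ) : ℤ) with hpu
  set pv : ℤ := ((x.symm (Sum.inl v) : ℕ) : ℤ) with hpv
  set q : ℤ := ((y.symm (Sum.inl u) : ℕ) : ℤ) with hq
  set g : V → ℤ := fun w => ((y.symm (Sum.inl w) : ℕ) : ℤ) - ((x.symm (Sum.inl w) : ℕ) : ℤ)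
    with hgdef
  have hg : ∀ w, w ≠ u → w ≠ v → g w = 0 := by
    intro w h1 h2; simp [hgdef, hw w h1 h2]
  have hcost : ∀ (z : Fin (numElts G) ≃ V ⊕ G.edgeSet), (cost G z : ℤ)
      = ∑ e : G.edgeSet, (edgeCost G z e : ℤ) := by
    intro z
    rw [cost, finsum_eq_sum_of_fintype]
    push_cast
    rfl
  have hdiff : (cost G y : ℤ) - (cost G x : ℤ)
      = 2 * (∑ e : G.edgeSet, (((y.symm (Sum.inr e) : ℕ) : ℤ) - ((x.symm (Sum.inr e) : ℕ) : ℤ)))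
        - (G.degree u * g u + G.degree v * g v) := by
    rw [hcost, hcost, ← sum_lift G g u v huv hg, ← Finset.sum_sub_distrib, Finset.mul_sum,
      ← Finset.sum_sub_distrib]
    refine Finset.sum_congr rfl fun e _ => ?_
    rw [edgeCost_cast G x hx e, edgeCost_cast G y hy e]
    obtain ⟨a, b, hab⟩ := Sym2.exists.mp ⟨(e : Sym2 V), rfl⟩
    rw [hab]
    simp only [Sym2.lift_mk, hgdef]
    ring
  have hgu : g u = q - pu := by simp [hgdef, hq, hpu]
  have hgv : g v = pu - pv := by simp [hgdef, hpu, hpv, hv2]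
  have hlt : (cost G x : ℤ) < (cost G y : ℤ) := by
    have h1 : (0:ℤ) ≤ G.degree u := by positivity
    have h2 : (G.degree u : ℤ) + 1 ≤ G.degree v := by exact_mod_cast hdeg
    have h3 : pu < pv := by rw [hpu, hpv]; exact_mod_cast hpuv
    have h4 : q ≤ pv := by rw [hq, hpv]; exact_mod_cast hqle
    nlinarith [hdiff, hΔ, mul_nonneg h1 (sub_nonneg.mpr h4)]
  exact_mod_cast hlt

/-- A maximum-cost construction sequence places vertices in non-increasing order of degree. -/
theorem maxCost_degree_monotone {V : Type*} [Fintype V] (G : SimpleGraph V)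
    [DecidableRel G.Adj]
    (x : Fin (numElts G) ≃ V ⊕ G.edgeSet) (hx : IsCSeq G x)
    (hmax : cost G x = maxCost G) :
    ∀ u v : V, x.symm (Sum.inl u) < x.symm (Sum.inl v) → G.degree v ≤ G.degree u := by
  classical
  haveI : Fintype G.edgeSet := Fintype.ofFinite _
  intro u v huv
  by_contra hdeg
  push_neg at hdeg
  set pu := x.symm (Sum.inl u) with hpu
  set pv := x.symm (Sum.inl v) with hpv
  have hxpu : x pu = Sum.inl u := by rw [hpu, Equiv.apply_symm_apply]
  have hxpv : x pv = Sum.inl v := by rw [hpv, Equiv.apply_symm_apply]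
  have hpupv : pu < pv := huv
  have hbdd : BddAbove {c | ∃ z, IsCSeq G z ∧ cost G z = c} := by
    have hsub : {c | ∃ z, IsCSeq G z ∧ cost G z = c} ⊆ Set.range (cost G) := by
      rintro c ⟨z, _, rfl⟩; exact ⟨z, rfl⟩
    exact ((Set.finite_range (cost G)).subset hsub).bddAbove
  have contra : ∀ (y : Fin (numElts G) ≃ V ⊕ G.edgeSet),
      IsCSeq G y → ¬ (cost G x < cost G y) := by
    intro y hy hlt
    have hle : cost G y ≤ maxCost G := le_csSup hbdd ⟨y, hy, rfl⟩
    omega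
  -- the set of positions of "window" edges incident to u
  set S : Finset (Fin (numElts G)) :=
    Finset.univ.filter
      (fun a => pu < a ∧ a < pv ∧ ∃ e : G.edgeSet, x a = Sum.inr e ∧ u ∈ (e : Sym2 V))
    with hS
  by_cases hSne : S.Nonempty
  · -- Case B : there is a window edge incident to u
    set q : Fin (numElts G) := S.min' hSne with hqdef
    have hqmem : q ∈ Finset.univ.filter
        (fun a => pu < a ∧ a < pv ∧ ∃ e : G.edgeSet, x a = Sum.inr e ∧ u ∈ (e : Sym2 V)) :=
      S.min'_mem hSne
    obtain ⟨-, hpuq, hqpv, e₀, hxq, hue₀⟩ := Finset.mem_filter.mp hqmem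
    set τ : Equiv.Perm (Fin (numElts G)) := (Equiv.swap pu q).trans (Equiv.swap pu pv) with hτdef
    have hqpu : q ≠ pu := ne_of_gt hpuq
    have hqpv' : q ≠ pv := ne_of_lt hqpv
    have hpvpu : pv ≠ pu := ne_of_gt hpupv
    have hτpu : τ pu = q := by
      simp [hτdef, Equiv.swap_apply_left, Equiv.swap_apply_of_ne_of_ne hqpu hqpv']
    have hτq : τ q = pv := by
      simp [hτdef, Equiv.swap_apply_of_ne_of_ne, hqpu, Equiv.swap_apply_left]
    have hτpv : τ pv = pu := by
      simp [hτdef, Equiv.swap_apply_of_ne_of_ne hpvpu (Ne.symm hqpv'), Equiv.swap_apply_right]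
    have hτid : ∀ a, a ≠ pu → a ≠ q → a ≠ pv → τ a = a := by
      intro a h1 h2 h3
      simp [hτdef, Equiv.swap_apply_of_ne_of_ne, h1, h2, h3]
    set y : Fin (numElts G) ≃ V ⊕ G.edgeSet := τ.symm.trans x with hydef
    have hysymm : ∀ z, y.symm z = τ (x.symm z) := by intro z; simp [hydef]
    -- positions of vertices are never q ; positions of edges are never pu, pv
    have hvq : ∀ w : V, x.symm (Sum.inl w) ≠ q := by
      intro w h
      have : Sum.inl w = Sum.inr e₀ := by rw [← hxq, ← h, Equiv.apply_symm_apply]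
      simp at this
    have hepu : ∀ e : G.edgeSet, x.symm (Sum.inr e) ≠ pu := by
      intro e h
      have : Sum.inr e = Sum.inl u := by rw [← hxpu, ← h, Equiv.apply_symm_apply]
      simp at this
    have hepv : ∀ e : G.edgeSet, x.symm (Sum.inr e) ≠ pv := by
      intro e h
      have : Sum.inr e = Sum.inl v := by rw [← hxpv, ← h, Equiv.apply_symm_apply]
      simp at this
    have hy : IsCSeq G y := by
      intro e w hw
      rw [hysymm, hysymm]
      set a := x.symm (Sum.inl w) with hadef
      set b := x.symm (Sum.inr e) with hbdef
      have hab : a < b := hx e w hw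
      have haq : a ≠ q := hvq w
      have hbpu : b ≠ pu := hepu e
      have hbpv : b ≠ pv := hepv e
      by_cases hbq : b = q
      · -- e is the moved edge e₀
        have he0 : e = e₀ := by
          have : (Sum.inr e : V ⊕ G.edgeSet) = Sum.inr e₀ := by rw [← hxq, ← hbq, hbdef, Equiv.apply_symm_apply]
          simpa using this
        rw [hbq, hτq]
        by_cases hapu : a = pu
        · rw [hapu, hτpu]; exact hqpv
        · have hapv : a ≠ pv := by
            intro h
            have hwv : w = v := by
              have : (Sum.inl w : V ⊕ G.edgeSet) = Sum.inl v := by rw [← hxpv, ← h, hadef, Equiv.apply_symm_apply]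
              simpa using this
            subst hwv
            have : pv < q := by
              have := hx e₀ w (by rwa [he0] at hw)
              rw [← hpv] at this
              rwa [show x.symm (Sum.inr e₀) = q by rw [← hxq, Equiv.symm_apply_apply]] at this
            exact absurd (lt_trans this hqpv) (lt_irrefl pv)
          rw [hτid a hapu haq hapv]
          exact lt_trans (hbq ▸ hab) hqpv
      · rw [hτid b hbpu hbq hbpv]
        by_cases hapu : a = pu
        · -- w = u
          have hwu : w = u := by
            have : (Sum.inl w : V ⊕ G.edgeSet) = Sum.inl u := by rw [← hxpu, ← hapu, hadef, Equiv.apply_symm_apply]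
            simpa using this
          rw [hapu, hτpu]
          by_cases hbpv2 : b < pv
          · have hbS : b ∈ S := by
              rw [hS, Finset.mem_filter]
              exact ⟨Finset.mem_univ b, hapu ▸ hab, hbpv2,
                e, by rw [hbdef, Equiv.apply_symm_apply], hwu ▸ hw⟩
            exact lt_of_le_of_ne (S.min'_le b hbS) (Ne.symm hbq)
          · push_neg at hbpv2
            exact lt_of_lt_of_le hqpv (lt_of_le_of_ne hbpv2 (Ne.symm hbpv)).le
        · by_cases hapv : a = pv
          · rw [hapv, hτpv]
            exact lt_trans hpupv (hapv ▸ hab)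
          · rw [hτid a hapu haq hapv]
            exact hab
    refine contra y hy ?_
    refine cost_lt G x y hx hy u v hpupv hdeg ?_ ?_ ?_ ?_
    · intro w h1 h2
      rw [hysymm]
      congr 1
      refine hτid _ (fun h => h1 ?_) (hvq w) (fun h => h2 ?_)
      · have : (Sum.inl w : V ⊕ G.edgeSet) = Sum.inl u := by rw [← hxpu, ← h, Equiv.apply_symm_apply]
        simpa using this
      · have : (Sum.inl w : V ⊕ G.edgeSet) = Sum.inl v := by rw [← hxpv, ← h, Equiv.apply_symm_apply]
        simpa using this
    · rw [hysymm, ← hpv, hτpv, hpu]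
    · rw [hysymm, ← hpu, hτpu]
      exact le_of_lt hqpv
    · have hyu : y.symm (Sum.inl u) = q := by rw [hysymm, ← hpu, hτpu]
      have heq : ∀ e : G.edgeSet, e ≠ e₀ →
          (((y.symm (Sum.inr e) : ℕ) : ℤ) - ((x.symm (Sum.inr e) : ℕ) : ℤ)) = 0 := by
        intro e he
        have hbq : x.symm (Sum.inr e) ≠ q := by
          intro h
          have : (Sum.inr e : V ⊕ G.edgeSet) = Sum.inr e₀ := by rw [← hxq, ← h, Equiv.apply_symm_apply]
          exact he (by simpa using this)
        rw [hysymm, hτid _ (hepu e) hbq (hepv e)]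
        ring
      have hsum : ∑ e : G.edgeSet, (((y.symm (Sum.inr e) : ℕ) : ℤ) - ((x.symm (Sum.inr e) : ℕ) : ℤ))
          = ((pv : ℕ) : ℤ) - ((q : ℕ) : ℤ) := by
        rw [Finset.sum_eq_single_of_mem e₀ (Finset.mem_univ e₀) (fun e _ he => heq e he)]
        have hxe0 : x.symm (Sum.inr e₀) = q := by rw [← hxq, Equiv.symm_apply_apply]
        rw [hysymm, hxe0, hτq]
      rw [hsum, hyu, ← hpv]
  · -- Case A : no window edge incident to u ; swap u and v
    set τ : Equiv.Perm (Fin (numElts G)) := Equiv.swap pu pv with hτdef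
    have hτpu : τ pu = pv := Equiv.swap_apply_left pu pv
    have hτpv : τ pv = pu := Equiv.swap_apply_right pu pv
    have hτid : ∀ a, a ≠ pu → a ≠ pv → τ a = a := by
      intro a h1 h2; exact Equiv.swap_apply_of_ne_of_ne h1 h2
    set y : Fin (numElts G) ≃ V ⊕ G.edgeSet := τ.symm.trans x with hydef
    have hysymm : ∀ z, y.symm z = τ (x.symm z) := by intro z; simp [hydef]
    have hepu : ∀ e : G.edgeSet, x.symm (Sum.inr e) ≠ pu := by
      intro e h
      have : Sum.inr e = Sum.inl u := by rw [← hxpu, ← h, Equiv.apply_symm_apply]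
      simp at this
    have hepv : ∀ e : G.edgeSet, x.symm (Sum.inr e) ≠ pv := by
      intro e h
      have : Sum.inr e = Sum.inl v := by rw [← hxpv, ← h, Equiv.apply_symm_apply]
      simp at this
    have hy : IsCSeq G y := by
      intro e w hw
      rw [hysymm, hysymm]
      set a := x.symm (Sum.inl w) with hadef
      set b := x.symm (Sum.inr e) with hbdef
      have hab : a < b := hx e w hw
      have hbpu : b ≠ pu := hepu e
      have hbpv : b ≠ pv := hepv e
      rw [hτid b hbpu hbpv]
      by_cases hapu : a = pu
      · have hwu : w = u := by
          have : (Sum.inl w : V ⊕ G.edgeSet) = Sum.inl u := by rw [← hxpu, ← hapu, hadef, Equiv.apply_symm_apply]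
          simpa using this
        rw [hapu, hτpu]
        by_cases hbpv2 : b < pv
        · exact absurd ⟨b, Finset.mem_filter.mpr ⟨Finset.mem_univ b, hapu ▸ hab, hbpv2,
            e, by rw [hbdef, Equiv.apply_symm_apply], hwu ▸ hw⟩⟩ hSne
        · push_neg at hbpv2
          exact lt_of_le_of_ne hbpv2 (Ne.symm hbpv)
      · by_cases hapv : a = pv
        · rw [hapv, hτpv]
          exact lt_trans hpupv (hapv ▸ hab)
        · rw [hτid a hapu hapv]
          exact hab
    refine contra y hy ?_
    refine cost_lt G x y hx hy u v hpupv hdeg ?_ ?_ ?_ ?_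
    · intro w h1 h2
      rw [hysymm]
      congr 1
      refine hτid _ (fun h => h1 ?_) (fun h => h2 ?_)
      · have : (Sum.inl w : V ⊕ G.edgeSet) = Sum.inl u := by rw [← hxpu, ← h, Equiv.apply_symm_apply]
        simpa using this
      · have : (Sum.inl w : V ⊕ G.edgeSet) = Sum.inl v := by rw [← hxpv, ← h, Equiv.apply_symm_apply]
        simpa using this
    · rw [hysymm, ← hpv, hτpv, hpu]
    · rw [hysymm, ← hpu, hτpu]
    · have hyu : y.symm (Sum.inl u) = pv := by rw [hysymm, ← hpu, hτpu]
      have hsum : ∑ e : G.edgeSet, (((y.symm (Sum.inr e) : ℕ) : ℤ) - ((x.symm (Sum.inr e) : ℕ) : ℤ))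
          = 0 := by
        refine Finset.sum_eq_zero fun e _ => ?_
        rw [hysymm, hτid _ (hepu e) (hepv e)]
        ring
      rw [hsum, hyu, ← hpv]
      ring_nf
      exact le_refl _
end ConsCost
end

section
/- Cost of an easy construction sequence from the degree sequence: if x is an easy construction sequence for a finite simple graph G placing the vertices in the order v_1, …, v_p, and d_j = deg(v_j), then ν(x) = q(2p + q + 1) − Σ_{j=1}^{p} j·d_j. -/
namespace ConsCost

variable {V : Type*} [Fintype V]

/-- weighted handshake -/
lemma sum_lift_eq (G : SimpleGraph V) [DecidableRel G.Adj] (f : V → ℕ) :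
    ∑ e ∈ G.edgeFinset,
        Sym2.lift ⟨fun u w => f u + f w, fun u w => by dsimp only; omega⟩ e
      = ∑ v, G.degree v * f v := by
  classical
  have h1 : ∑ d : G.Dart, f d.fst = ∑ v, G.degree v * f v := by
    rw [← Finset.sum_fiberwise_of_maps_to (g := fun d : G.Dart => d.fst)
      (fun d _ => Finset.mem_univ _)]
    refine Finset.sum_congr rfl fun v _ => ?_
    rw [Finset.sum_congr rfl (fun d hd => by rw [(Finset.mem_filter.mp hd).2]),
        Finset.sum_const, smul_eq_mul]
    congr 1
    convert SimpleGraph.dart_fst_fiber_card_eq_degree (G := G) v using 2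
  have h2 : ∑ d : G.Dart, f d.fst = ∑ e ∈ G.edgeFinset,
      Sym2.lift ⟨fun u w => f u + f w, fun u w => by dsimp only; omega⟩ e := by
    rw [← Finset.sum_fiberwise_of_maps_to (g := SimpleGraph.Dart.edge)
      (fun d _ => SimpleGraph.mem_edgeFinset.mpr d.edge_mem)]
    refine Finset.sum_congr rfl fun e he => ?_
    induction e with
    | _ u w =>
      have hme : G.Adj u w := by
        simpa using SimpleGraph.mem_edgeFinset.mp he
      let d : G.Dart := ⟨(u, w), hme⟩
      have hfib : ({d' : G.Dart | d'.edge = s(u, w)} : Finset _) = {d, d.symm} := by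
        have := d.edge_fiber
        exact this
      rw [show (Finset.univ.filter fun d' : G.Dart => d'.edge = s(u,w)) =
            ({d' : G.Dart | d'.edge = s(u, w)} : Finset _) from rfl, hfib,
          Finset.sum_pair d.symm_ne.symm]
      simp [d, SimpleGraph.Dart.symm]
  omega

/-- Cost of an easy construction sequence in terms of the degree sequence:
`ν(x) = q(2p + q + 1) − Σ_{j=1}^{p} j·d_j`, where the vertex placed at (1-indexed)
position `j` has degree `d_j`.  (Stated additively to avoid truncated subtraction.) -/
theorem cost_easy_of_degrees {V : Type*} [Fintype V] (G : SimpleGraph V)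
    [DecidableRel G.Adj]
    (x : Fin (numElts G) ≃ V ⊕ G.edgeSet) (hx : IsCSeq G x)
    (heasy : ∀ (v : V) (e : G.edgeSet), x.symm (Sum.inl v) < x.symm (Sum.inr e)) :
    cost G x + ∑ v : V, ((x.symm (Sum.inl v) : ℕ) + 1) * G.degree v =
      Nat.card G.edgeSet * (2 * Fintype.card V + Nat.card G.edgeSet + 1) := by
  classical
  set p := Fintype.card V with hp
  set q := Nat.card G.edgeSet with hq
  have hn : numElts G = p + q := rfl
  have hqcard : q = G.edgeFinset.card := by
    rw [hq, Nat.card_eq_fintype_card, SimpleGraph.edgeFinset, Set.toFinset_card]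
  set gv : V → ℕ := fun v => (x.symm (Sum.inl v) : ℕ) with hgv
  set ge : G.edgeSet → ℕ := fun e => (x.symm (Sum.inr e) : ℕ) with hge
  set L : Sym2 V → ℕ := Sym2.lift ⟨fun u w => gv u + gv w, fun u w => by dsimp only; omega⟩
    with hL
  -- per-edge inequality
  have hlt : ∀ e : G.edgeSet, L (e : Sym2 V) + 2 ≤ 2 * ge e := by
    rintro ⟨e, hme⟩
    induction e with
    | _ u w =>
      have h1 : gv u < ge ⟨s(u,w), hme⟩ := heasy u _
      have h2 : gv w < ge ⟨s(u,w), hme⟩ := heasy w _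
      simp only [hL, Sym2.lift_mk]
      omega
  -- cost as finset sum
  have hcost : cost G x = ∑ e : G.edgeSet, (2 * ge e - L (e : Sym2 V)) := by
    rw [cost, finsum_eq_sum_of_fintype]
    rfl
  have hA : cost G x + ∑ e : G.edgeSet, L (e : Sym2 V) = ∑ e : G.edgeSet, 2 * ge e := by
    rw [hcost, ← Finset.sum_add_distrib]
    refine Finset.sum_congr rfl fun e _ => ?_
    have := hlt e
    omega
  -- sum of lifts = weighted degree sum
  have hB : ∑ e : G.edgeSet, L (e : Sym2 V) = ∑ v, G.degree v * gv v := by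
    rw [← sum_lift_eq G gv]
    exact (Finset.sum_subtype G.edgeFinset (fun e => SimpleGraph.mem_edgeFinset) L).symm
  -- position sums
  have hsplit : ∑ i : Fin (numElts G), (i : ℕ) = ∑ v, gv v + ∑ e : G.edgeSet, ge e := by
    rw [← Equiv.sum_comp x.symm (fun i => (i : ℕ)), Fintype.sum_sum_type]
  have hvlt : ∀ v, gv v < p := by
    intro v
    by_contra hcon
    push_neg at hcon
    -- the q edge positions are distinct and all > gv v
    have hsub : (Finset.univ.image fun e : G.edgeSet => x.symm (Sum.inr e)) ⊆
        Finset.Ioi (x.symm (Sum.inl v)) := by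
      intro i hi
      simp only [Finset.mem_image] at hi
      obtain ⟨e, _, rfl⟩ := hi
      exact Finset.mem_Ioi.mpr (heasy v e)
    have hcard : (Finset.univ.image fun e : G.edgeSet => x.symm (Sum.inr e)).card = q := by
      rw [Finset.card_image_of_injective _ fun a b h => Sum.inr_injective (x.symm.injective h),
        Finset.card_univ, hq, Nat.card_eq_fintype_card]
    have := Finset.card_le_card hsub
    rw [hcard, Fin.card_Ioi] at this
    have hlt' : (x.symm (Sum.inl v) : ℕ) < numElts G := (x.symm (Sum.inl v)).2
    have hgveq : gv v = (x.symm (Sum.inl v) : ℕ) := rfl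
    omega
  have hvsum : ∑ v, gv v = ∑ j ∈ Finset.range p, j := by
    have hinj : Function.Injective gv := by
      intro a b hab
      have : x.symm (Sum.inl a) = x.symm (Sum.inl b) := Fin.ext hab
      exact Sum.inl_injective (x.symm.injective this)
    have himg : Finset.univ.image gv = Finset.range p := by
      apply Finset.eq_of_subset_of_card_le
      · intro j hj
        simp only [Finset.mem_image] at hj
        obtain ⟨v, _, rfl⟩ := hj
        exact Finset.mem_range.mpr (hvlt v)
      · rw [Finset.card_range, Finset.card_image_of_injective _ hinj, Finset.card_univ]
    rw [← himg, Finset.sum_image (fun a _ b _ h => hinj h)]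
  have htot : ∑ i : Fin (numElts G), (i : ℕ) = ∑ j ∈ Finset.range (p + q), j := by
    rw [hn]; exact Fin.sum_univ_eq_sum_range (fun j => j) (p + q)
  have gauss1 : (∑ j ∈ Finset.range (p + q), j) * 2 = (p + q) * (p + q - 1) :=
    Finset.sum_range_id_mul_two _
  have gauss2 : (∑ j ∈ Finset.range p, j) * 2 = p * (p - 1) :=
    Finset.sum_range_id_mul_two _
  have key : (p+q)*(p+q-1) + 2*q = p*(p-1) + q*(2*p+q+1) := by
    rcases p with _|p' <;> rcases q with _|q' <;> simp [Nat.succ_sub_one] <;> ring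
  have hdeg : ∑ v, G.degree v = 2 * q := by
    rw [SimpleGraph.sum_degrees_eq_twice_card_edges, hqcard]
  have hexp : ∑ v : V, (gv v + 1) * G.degree v
      = ∑ v, G.degree v * gv v + ∑ v, G.degree v := by
    rw [← Finset.sum_add_distrib]
    exact Finset.sum_congr rfl fun v _ => by ring
  have h2e : ∑ e : G.edgeSet, 2 * ge e = 2 * ∑ e : G.edgeSet, ge e :=
    (Finset.mul_sum _ _ _).symm
  -- combine
  have final := hA
  rw [hB, h2e] at final
  calc cost G x + ∑ v : V, (gv v + 1) * G.degree v
      = cost G x + ∑ v, G.degree v * gv v + ∑ v, G.degree v := by rw [hexp]; ring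
    _ = 2 * ∑ e : G.edgeSet, ge e + 2 * q := by rw [final, hdeg]
    _ = q * (2 * p + q + 1) := by
        have h1 : ∑ e : G.edgeSet, ge e =
            ∑ j ∈ Finset.range (p+q), j - ∑ j ∈ Finset.range p, j := by
          omega
        have hle : ∑ j ∈ Finset.range p, j ≤ ∑ j ∈ Finset.range (p+q), j := by omega
        omega


end ConsCost
end

section
/- If G = (V,E) is a regular finite simple graph (every vertex has the same degree) with p vertices and q edges, then every easy construction sequence x for G satisfies ν(x) = q(p + q), and consequently ν*(G) = q(p + q). -/
namespace ConsCost

variable {V : Type*} [Fintype V]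

open Finset
lemma sum_range_card_le (s : Finset ℕ) : ∑ i ∈ Finset.range s.card, i ≤ ∑ i ∈ s, i := by
  induction s using Finset.strongInduction with
  | _ s ih =>
    rcases s.eq_empty_or_nonempty with rfl | hs
    · simp
    · set m := s.max' hs with hm
      have hmem : m ∈ s := s.max'_mem hs
      have h1 : s.card ≤ m + 1 := by
        have hsub : s ⊆ Finset.range (m + 1) := fun a ha =>
          Finset.mem_range.2 (Nat.lt_succ_of_le (Finset.le_max' s a ha))
        simpa using Finset.card_le_card hsub
      have ih' := ih (s.erase m) (Finset.erase_ssubset hmem)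
      rw [Finset.card_erase_of_mem hmem] at ih'
      have hsum : m + ∑ i ∈ s.erase m, i = ∑ i ∈ s, i := Finset.add_sum_erase s id hmem
      obtain ⟨k, hk⟩ : ∃ k, s.card = k + 1 := ⟨s.card - 1, by
        have := Finset.card_pos.2 hs; omega⟩
      rw [hk, Finset.sum_range_succ]
      have hk' : s.card - 1 = k := by omega
      rw [hk'] at ih'
      omega

lemma gauss (n : ℕ) : 2 * (∑ i ∈ Finset.range n, i) + n = n * n := by
  induction n with
  | zero => simp
  | succ n ih =>
    rw [Finset.sum_range_succ]
    have : (n + 1) * (n + 1) = n * n + 2 * n + 1 := by ring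
    omega

lemma handshake {V : Type*} [Fintype V] [DecidableEq V] (G : SimpleGraph V)
    [DecidableRel G.Adj] (f : V → ℕ) (F : {g : V → V → ℕ // ∀ u w, g u w = g w u})
    (hF : ∀ u w, F.1 u w = f u + f w) :
    ∑ e ∈ G.edgeFinset, Sym2.lift F e = ∑ v, G.degree v * f v := by
  have h1 : ∑ d : G.Dart, f d.toProd.1 = ∑ v, G.degree v * f v := by
    rw [← Finset.sum_fiberwise Finset.univ (fun d : G.Dart => d.toProd.1)
      (fun d => f d.toProd.1)]
    refine Finset.sum_congr rfl fun v _ => ?_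
    calc ∑ d ∈ univ.filter (fun d : G.Dart => d.toProd.1 = v), f d.toProd.1
        = ∑ _d ∈ univ.filter (fun d : G.Dart => d.toProd.1 = v), f v :=
          Finset.sum_congr rfl (fun d hd => by rw [(Finset.mem_filter.1 hd).2])
      _ = #(univ.filter (fun d : G.Dart => d.toProd.1 = v)) * f v := by
          rw [Finset.sum_const, smul_eq_mul]
      _ = G.degree v * f v := by rw [SimpleGraph.dart_fst_fiber_card_eq_degree]
  have h2 : ∑ d : G.Dart, f d.toProd.1 = ∑ e ∈ G.edgeFinset, Sym2.lift F e := by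
    rw [← Finset.sum_fiberwise_of_maps_to
      (fun d (_ : d ∈ (univ : Finset G.Dart)) =>
        SimpleGraph.mem_edgeFinset.2 d.edge_mem) (fun d : G.Dart => f d.toProd.1)]
    refine Finset.sum_congr rfl fun e he => ?_
    have he' : e ∈ G.edgeSet := SimpleGraph.mem_edgeFinset.1 he
    clear he
    induction e with
    | _ u w =>
      have ha : G.Adj u w := he'
      have hfib : (univ.filter fun d' : G.Dart => d'.edge = s(u, w)) =
          {(⟨(u, w), ha⟩ : G.Dart), (⟨(u, w), ha⟩ : G.Dart).symm} :=
        SimpleGraph.Dart.edge_fiber (⟨(u, w), ha⟩ : G.Dart)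
      rw [hfib, Finset.sum_pair ((⟨(u, w), ha⟩ : G.Dart).symm_ne).symm]
      rw [Sym2.lift_mk, hF]
      rfl
  exact h2.symm.trans h1


/-- For a regular graph, every easy construction sequence has cost `q(p+q)`, and
consequently `ν*(G) = q(p+q)`. -/
theorem regular_maxCost {V : Type*} [Fintype V] (G : SimpleGraph V)
    [DecidableRel G.Adj] (r : ℕ) (hreg : G.IsRegularOfDegree r) :
    (∀ (x : Fin (numElts G) ≃ V ⊕ G.edgeSet), IsCSeq G x →
        (∀ (v : V) (e : G.edgeSet), x.symm (Sum.inl v) < x.symm (Sum.inr e)) →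
        cost G x = Nat.card G.edgeSet * (Fintype.card V + Nat.card G.edgeSet)) ∧
      maxCost G = Nat.card G.edgeSet * (Fintype.card V + Nat.card G.edgeSet) := by
  classical
  set p := Fintype.card V with hp
  set q := Nat.card G.edgeSet with hq
  have hqcard : q = G.edgeFinset.card := by
    rw [hq, Nat.card_eq_fintype_card, SimpleGraph.edgeFinset_card]
  have hN : numElts G = p + q := rfl
  -- degree sum
  have hpr : p * r = 2 * q := by
    have h := G.sum_degrees_eq_twice_card_edges
    rw [Finset.sum_congr rfl (fun v _ => hreg v), Finset.sum_const, smul_eq_mul,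
      Finset.card_univ] at h
    rw [hp, hqcard]
    exact h
  -- key identity for any construction sequence
  have main : ∀ (x : Fin (numElts G) ≃ V ⊕ G.edgeSet), IsCSeq G x →
      cost G x + r * (∑ v, ((x.symm (Sum.inl v) : Fin (numElts G)) : ℕ))
        = 2 * ∑ e : G.edgeSet, ((x.symm (Sum.inr e) : Fin (numElts G)) : ℕ) := by
    intro x hx
    have hle : ∀ e : G.edgeSet,
        Sym2.lift ⟨fun u w => ((x.symm (Sum.inl u) : ℕ) + (x.symm (Sum.inl w) : ℕ)),
          fun u w => by dsimp only; omega⟩ (e : Sym2 V)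
          ≤ 2 * ((x.symm (Sum.inr e) : Fin (numElts G)) : ℕ) := by
      rintro ⟨s, hs⟩
      induction s with
      | _ u w =>
        have h1 := hx ⟨s(u, w), hs⟩ u (Sym2.mem_mk_left u w)
        have h2 := hx ⟨s(u, w), hs⟩ w (Sym2.mem_mk_right u w)
        rw [Fin.lt_def] at h1 h2
        simpa [Sym2.lift_mk] using by omega
    have hlift : ∑ e : G.edgeSet,
        Sym2.lift ⟨fun u w => ((x.symm (Sum.inl u) : ℕ) + (x.symm (Sum.inl w) : ℕ)),
          fun u w => by dsimp only; omega⟩ (e : Sym2 V)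
        = r * ∑ v, ((x.symm (Sum.inl v) : Fin (numElts G)) : ℕ) := by
      rw [← Finset.sum_subtype G.edgeFinset (fun e => SimpleGraph.mem_edgeFinset)
        (fun s => Sym2.lift ⟨fun u w => ((x.symm (Sum.inl u) : ℕ) + (x.symm (Sum.inl w) : ℕ)),
          fun u w => by dsimp only; omega⟩ s)]
      rw [handshake G (fun v => ((x.symm (Sum.inl v) : Fin (numElts G)) : ℕ)) _
        (fun u w => rfl)]
      rw [Finset.mul_sum]
      exact Finset.sum_congr rfl fun v _ => by rw [hreg v]
    rw [cost, finsum_eq_sum_of_fintype]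
    simp only [edgeCost]
    rw [Finset.sum_tsub_distrib Finset.univ (fun e _ => hle e)]
    rw [hlift]
    have h2 : r * (∑ v, ((x.symm (Sum.inl v) : Fin (numElts G)) : ℕ))
        ≤ ∑ e : G.edgeSet, 2 * ((x.symm (Sum.inr e) : Fin (numElts G)) : ℕ) := by
      rw [← hlift]
      exact Finset.sum_le_sum fun e _ => hle e
    rw [← Finset.mul_sum] at h2 ⊢
    omega
  -- total sum over all positions
  have total : ∀ (x : Fin (numElts G) ≃ V ⊕ G.edgeSet),
      (∑ v, ((x.symm (Sum.inl v) : Fin (numElts G)) : ℕ))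
        + (∑ e : G.edgeSet, ((x.symm (Sum.inr e) : Fin (numElts G)) : ℕ))
        = ∑ i ∈ Finset.range (p + q), i := by
    intro x
    have h := Equiv.sum_comp x.symm (fun i : Fin (numElts G) => (i : ℕ))
    rw [Fintype.sum_sum_type] at h
    rw [← hN, ← Fin.sum_univ_eq_sum_range (fun i => i) (numElts G)]
    exact h
  -- vertex positions lower bound for arbitrary c-sequences
  have hinj : ∀ (x : Fin (numElts G) ≃ V ⊕ G.edgeSet),
      Function.Injective (fun v : V => ((x.symm (Sum.inl v) : Fin (numElts G)) : ℕ)) := by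
    intro x a b h
    have h2 : x.symm (Sum.inl a) = x.symm (Sum.inl b) := Fin.val_injective h
    simpa using x.symm.injective h2
  have vertexUB : ∀ (x : Fin (numElts G) ≃ V ⊕ G.edgeSet),
      ∑ i ∈ Finset.range p, i ≤ ∑ v, ((x.symm (Sum.inl v) : Fin (numElts G)) : ℕ) := by
    intro x
    have h := sum_range_card_le
      (Finset.image (fun v : V => ((x.symm (Sum.inl v) : Fin (numElts G)) : ℕ)) Finset.univ)
    rw [Finset.card_image_of_injective _ (hinj x), Finset.card_univ,
      Finset.sum_image (fun a _ b _ hab => hinj x hab)] at h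
    exact h
  -- for easy sequences the vertex positions are exactly 0..p-1
  have vertexEQ : ∀ (x : Fin (numElts G) ≃ V ⊕ G.edgeSet),
      (∀ (v : V) (e : G.edgeSet), x.symm (Sum.inl v) < x.symm (Sum.inr e)) →
      ∑ v, ((x.symm (Sum.inl v) : Fin (numElts G)) : ℕ) = ∑ i ∈ Finset.range p, i := by
    intro x heasy
    set A := Finset.image (fun v : V => ((x.symm (Sum.inl v) : Fin (numElts G)) : ℕ))
      Finset.univ with hA
    have hAcard : A.card = p := by
      rw [hA, Finset.card_image_of_injective _ (hinj x), Finset.card_univ]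
    have hsub : A ⊆ Finset.range p := by
      intro a ha
      rw [hA, Finset.mem_image] at ha
      obtain ⟨v, -, rfl⟩ := ha
      rw [Finset.mem_range]
      by_contra hnot
      push_neg at hnot
      have hple : p ≤ numElts G := by rw [hN]; omega
      have hg : ∀ i : Fin p, ∃ u : V, x (Fin.castLE hple i) = Sum.inl u := by
        intro i
        cases he : x (Fin.castLE hple i) with
        | inl u => exact ⟨u, rfl⟩
        | inr e =>
          exfalso
          have h1 := heasy v e
          have h2 : x.symm (Sum.inr e) = Fin.castLE hple i := by
            rw [← he, Equiv.symm_apply_apply]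
          rw [h2, Fin.lt_def] at h1
          have : (i : ℕ) < p := i.isLt
          simp only [Fin.coe_castLE] at h1
          omega
      choose g hgspec using hg
      have hginj : Function.Injective g := by
        intro i j hij
        have : x (Fin.castLE hple i) = x (Fin.castLE hple j) := by
          rw [hgspec i, hgspec j, hij]
        have := x.injective this
        exact Fin.castLE_injective hple this
      have hvnot : ∀ i : Fin p, g i ≠ v := by
        intro i hgi
        have : x (Fin.castLE hple i) = Sum.inl v := by rw [hgspec i, hgi]
        have h2 : x.symm (Sum.inl v) = Fin.castLE hple i := by
          rw [← this, Equiv.symm_apply_apply]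
        have := congrArg Fin.val h2
        simp only [Fin.coe_castLE] at this
        have : (i : ℕ) < p := i.isLt
        omega
      have hsubset : Finset.image g Finset.univ ⊆ Finset.univ.erase v := by
        intro u hu
        rw [Finset.mem_image] at hu
        obtain ⟨i, -, rfl⟩ := hu
        exact Finset.mem_erase.2 ⟨hvnot i, Finset.mem_univ _⟩
      have hc1 : (Finset.image g Finset.univ).card = p := by
        rw [Finset.card_image_of_injective _ hginj, Finset.card_univ, Fintype.card_fin]
      have hc2 := Finset.card_le_card hsubset
      rw [hc1, Finset.card_erase_of_mem (Finset.mem_univ v), Finset.card_univ, ← hp] at hc2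
      have : 0 < p := by rw [hp]; exact Fintype.card_pos_iff.2 ⟨v⟩
      omega
    have : A = Finset.range p :=
      Finset.eq_of_subset_of_card_le hsub (by rw [hAcard, Finset.card_range])
    calc ∑ v, ((x.symm (Sum.inl v) : Fin (numElts G)) : ℕ)
        = ∑ a ∈ A, a := by
          rw [hA, Finset.sum_image fun a _ b _ hab => hinj x hab]
      _ = ∑ i ∈ Finset.range p, i := by rw [this]
  -- arithmetic: from the identities, compute the cost
  have arith : ∀ (C Sv : ℕ), (C + r * Sv = 2 * (∑ i ∈ Finset.range (p + q), i - Sv)) →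
      Sv ≤ ∑ i ∈ Finset.range (p + q), i → True := fun _ _ _ _ => trivial
  -- part 1 : easy sequences
  have part1 : ∀ (x : Fin (numElts G) ≃ V ⊕ G.edgeSet), IsCSeq G x →
      (∀ (v : V) (e : G.edgeSet), x.symm (Sum.inl v) < x.symm (Sum.inr e)) →
      cost G x = q * (p + q) := by
    intro x hx heasy
    have h1 := main x hx
    have h2 := total x
    have h3 := vertexEQ x heasy
    set Sp := ∑ i ∈ Finset.range p, i with hSp
    set T := ∑ i ∈ Finset.range (p + q), i with hT
    set Se := ∑ e : G.edgeSet, ((x.symm (Sum.inr e) : Fin (numElts G)) : ℕ) with hSe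
    rw [h3] at h1 h2
    -- h1 : cost G x + r * Sp = 2 * Se ; h2 : Sp + Se = T
    have gp := gauss p
    have gt := gauss (p + q)
    rw [← hSp] at gp
    rw [← hT] at gt
    -- move to ℤ
    have h1' : (cost G x : ℤ) + r * Sp = 2 * Se := by exact_mod_cast h1
    have h2' : (Sp : ℤ) + Se = T := by exact_mod_cast h2
    have gp' : 2 * (Sp : ℤ) + p = p * p := by exact_mod_cast gp
    have gt' : 2 * (T : ℤ) + (p + q) = (p + q) * (p + q) := by exact_mod_cast gt
    have hpr' : (p : ℤ) * r = 2 * q := by exact_mod_cast hpr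
    have hr2 : 2 * ((r : ℤ) * Sp) + r * p = r * (p * p) := by linear_combination (r : ℤ) * gp'
    have hr3 : (r : ℤ) * (p * p) = 2 * (q * p) := by linear_combination (p : ℤ) * hpr'
    have goal' : (cost G x : ℤ) = q * (p + q) := by linarith
    exact_mod_cast goal'
  -- part 2 : upper bound for any c-sequence
  have part2 : ∀ (x : Fin (numElts G) ≃ V ⊕ G.edgeSet), IsCSeq G x →
      cost G x ≤ q * (p + q) := by
    intro x hx
    have h1 := main x hx
    have h2 := total x
    have h3 := vertexUB x
    set Sp := ∑ i ∈ Finset.range p, i with hSp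
    set T := ∑ i ∈ Finset.range (p + q), i with hT
    set Sv := ∑ v, ((x.symm (Sum.inl v) : Fin (numElts G)) : ℕ) with hSv
    set Se := ∑ e : G.edgeSet, ((x.symm (Sum.inr e) : Fin (numElts G)) : ℕ) with hSe
    have gp := gauss p
    have gt := gauss (p + q)
    rw [← hSp] at gp
    rw [← hT] at gt
    have hmul : (2 + r) * Sp ≤ (2 + r) * Sv := Nat.mul_le_mul_left _ h3
    have h1' : (cost G x : ℤ) + r * Sv = 2 * Se := by exact_mod_cast h1
    have h2' : (Sv : ℤ) + Se = T := by exact_mod_cast h2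
    have gp' : 2 * (Sp : ℤ) + p = p * p := by exact_mod_cast gp
    have gt' : 2 * (T : ℤ) + (p + q) = (p + q) * (p + q) := by exact_mod_cast gt
    have hpr' : (p : ℤ) * r = 2 * q := by exact_mod_cast hpr
    have hmul' : (2 + (r : ℤ)) * Sp ≤ (2 + r) * Sv := by exact_mod_cast hmul
    have hr2 : 2 * ((r : ℤ) * Sp) + r * p = r * (p * p) := by linear_combination (r : ℤ) * gp'
    have hr3 : (r : ℤ) * (p * p) = 2 * (q * p) := by linear_combination (p : ℤ) * hpr'
    have goal' : (cost G x : ℤ) ≤ q * (p + q) := by nlinarith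
    exact_mod_cast goal'
  -- build an easy construction sequence
  have hcardE : Fintype.card G.edgeSet = q := by rw [hq, Nat.card_eq_fintype_card]
  let e1 : Fin p ≃ V := (Fintype.equivFinOfCardEq (hp.symm : Fintype.card V = p)).symm
  let e2 : Fin q ≃ G.edgeSet := (Fintype.equivFinOfCardEq hcardE).symm
  let x0 : Fin (numElts G) ≃ V ⊕ G.edgeSet :=
    (finCongr hN).trans (finSumFinEquiv.symm.trans (e1.sumCongr e2))
  have heasy0 : ∀ (v : V) (e : G.edgeSet), x0.symm (Sum.inl v) < x0.symm (Sum.inr e) := by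
    intro v e
    show ((finCongr hN).trans (finSumFinEquiv.symm.trans (e1.sumCongr e2))).symm (Sum.inl v)
      < ((finCongr hN).trans (finSumFinEquiv.symm.trans (e1.sumCongr e2))).symm (Sum.inr e)
    simp only [Equiv.symm_trans_apply, Equiv.sumCongr_symm, Equiv.sumCongr_apply,
      Sum.map_inl, Sum.map_inr, Equiv.symm_symm, finSumFinEquiv_apply_left,
      finSumFinEquiv_apply_right]
    rw [Fin.lt_def]
    simp only [finCongr_symm, finCongr_apply, Fin.coe_cast, Fin.coe_castAdd, Fin.coe_natAdd]
    have := (e1.symm v).isLt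
    omega
  have hx0 : IsCSeq G x0 := fun e v _ => heasy0 v e
  constructor
  · intro x hx heasy
    rw [part1 x hx heasy, hq, hp]
  · have hgreat : IsGreatest {c | ∃ x, IsCSeq G x ∧ cost G x = c} (q * (p + q)) := by
      constructor
      · exact ⟨x0, hx0, part1 x0 hx0 heasy0⟩
      · rintro c ⟨x, hx, rfl⟩
        exact part2 x hx
    rw [maxCost, hgreat.csSup_eq, hq, hp]


end ConsCost
end

section
/- The maximum construction cost of the path P_n with n vertices is ν*(P_n) = 2n² − 2n − 1 for all n ≥ 2. -/
namespace ConsCost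

variable {V : Type*} [Fintype V]

/-! ### Auxiliary counting lemmas -/

lemma card_mul_le_twice_sum : ∀ (k : ℕ) (s : Finset ℕ), s.card = k →
    k * (k - 1) ≤ 2 * ∑ i ∈ s, i := by
  intro k
  induction k with
  | zero => simp
  | succ k ih =>
    intro s hcard
    have hs : s.Nonempty := Finset.card_pos.mp (by omega)
    set M := s.max' hs with hMdef
    have hM : M ∈ s := s.max'_mem hs
    have hce : (s.erase M).card = k := by rw [Finset.card_erase_of_mem hM, hcard]; omega
    have h1 := ih (s.erase M) hce
    have hsub : s ⊆ Finset.range (M + 1) := fun a ha =>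
      Finset.mem_range.2 (Nat.lt_succ_of_le (s.le_max' a ha))
    have hcardle : s.card ≤ M + 1 := by
      simpa using Finset.card_le_card hsub
    have hsum : ∑ i ∈ s, i = M + ∑ i ∈ s.erase M, i := (Finset.add_sum_erase _ id hM).symm
    have hkM : k ≤ M := by omega
    have hid : (k + 1) * k = k * (k - 1) + 2 * k := by
      cases k with
      | zero => rfl
      | succ j => simp only [Nat.add_sub_cancel]; ring
    simp only [Nat.add_sub_cancel]
    omega

lemma twice_sum_le (N : ℕ) (s : Finset ℕ) (h : ∀ i ∈ s, i < N) :
    2 * ∑ i ∈ s, i + s.card * s.card + s.card ≤ 2 * (s.card * N) := by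
  classical
  rcases s.eq_empty_or_nonempty with rfl | hne
  · simp
  obtain ⟨N', rfl⟩ : ∃ N', N = N' + 1 := by
    obtain ⟨a, ha⟩ := hne
    have := h a ha; exact ⟨N - 1, by omega⟩
  set m := s.card with hm
  have hinj : Set.InjOn (fun i => N' - i) s := by
    intro a ha b hb hab
    have := h a ha; have := h b hb
    simp only at hab; omega
  set s' := s.image (fun i => N' - i) with hs'
  have hcard' : s'.card = m := Finset.card_image_of_injOn hinj
  have hsum' : ∑ j ∈ s', j = ∑ i ∈ s, (N' - i) := Finset.sum_image (by exact hinj)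
  have htot : ∑ i ∈ s, i + ∑ i ∈ s, (N' - i) = m * N' := by
    rw [← Finset.sum_add_distrib]
    rw [Finset.sum_congr rfl (fun i hi => (by have := h i hi; omega : i + (N' - i) = N'))]
    simp [mul_comm]
    exact Or.inl hm.symm
  have h1 := card_mul_le_twice_sum m s' (by omega)
  have hid : m * (m - 1) + m = m * m := by
    cases m with
    | zero => rfl
    | succ j => simp only [Nat.add_sub_cancel]; ring
  have hmul : m * N' + m = m * (N' + 1) := by ring
  omega

/-! ### The edges of the path graph -/

open SimpleGraph

/-- The `i`-th edge of the path graph on `m + 2` vertices. -/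
def pedge (m : ℕ) (i : Fin (m+1)) : (pathGraph (m+2)).edgeSet :=
  ⟨s(⟨i.1, by omega⟩, ⟨i.1+1, by omega⟩), by
    rw [SimpleGraph.mem_edgeSet, SimpleGraph.pathGraph_adj]; left; rfl⟩

lemma pedge_bij (m : ℕ) : Function.Bijective (pedge m) := by
  constructor
  · intro a b hab
    have h2 : (s(⟨a.1, by omega⟩, ⟨a.1+1, by omega⟩) : Sym2 (Fin (m+2)))
        = s(⟨b.1, by omega⟩, ⟨b.1+1, by omega⟩) := congrArg Subtype.val hab
    rw [Sym2.eq_iff] at h2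
    simp only [Fin.ext_iff, Fin.val_mk] at h2 ⊢
    omega
  · rintro ⟨e, he⟩
    induction e with
    | _ u v =>
      rw [SimpleGraph.mem_edgeSet, SimpleGraph.pathGraph_adj] at he
      rcases he with h | h
      · refine ⟨⟨u.1, by omega⟩, Subtype.ext ?_⟩
        show (s(_, _) : Sym2 (Fin (m+2))) = s(u, v)
        rw [Sym2.eq_iff]
        left
        constructor <;> · apply Fin.ext; simp only [Fin.val_mk]; try omega
      · refine ⟨⟨v.1, by omega⟩, Subtype.ext ?_⟩
        show (s(_, _) : Sym2 (Fin (m+2))) = s(u, v)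
        rw [Sym2.eq_iff]
        right
        constructor <;> · apply Fin.ext; simp only [Fin.val_mk]; try omega

lemma pedge_coe (m : ℕ) (i : Fin (m+1)) :
    (pedge m i : Sym2 (Fin (m+2))) = s(i.castSucc, i.succ) := rfl

lemma numElts_path (m : ℕ) : numElts (pathGraph (m+2)) = 2*m+3 := by
  have h : Nat.card (pathGraph (m+2)).edgeSet = m+1 := by
    rw [← Nat.card_congr (Equiv.ofBijective _ (pedge_bij m))]
    simp
  rw [numElts, h, Fintype.card_fin]
  omega

lemma cost_eq (m : ℕ)
    (x : Fin (numElts (pathGraph (m+2))) ≃ Fin (m+2) ⊕ (pathGraph (m+2)).edgeSet) :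
    cost (pathGraph (m+2)) x = ∑ i : Fin (m+1), edgeCost (pathGraph (m+2)) x (pedge m i) := by
  classical
  haveI : Fintype (pathGraph (m+2)).edgeSet := Fintype.ofBijective _ (pedge_bij m)
  rw [cost, finsum_eq_sum_of_fintype]
  exact (Fintype.sum_bijective _ (pedge_bij m) _ _ fun i => rfl).symm

/-! ### Upper bound -/

lemma cost_le (m : ℕ)
    (x : Fin (numElts (pathGraph (m+2))) ≃ Fin (m+2) ⊕ (pathGraph (m+2)).edgeSet)
    (hx : IsCSeq (pathGraph (m+2)) x) :
    cost (pathGraph (m+2)) x ≤ 2*m*m + 6*m + 3 := by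
  classical
  haveI : Fintype (pathGraph (m+2)).edgeSet := Fintype.ofBijective _ (pedge_bij m)
  have hNE := numElts_path m
  set g : Fin (m+2) → ℕ := fun v => (x.symm (Sum.inl v) : ℕ) with hgdef
  set h : Fin (m+1) → ℕ := fun i => (x.symm (Sum.inr (pedge m i)) : ℕ) with hhdef
  have hlt : ∀ (s : Fin (numElts (pathGraph (m+2)))), (s : ℕ) < 2*m+3 := by
    intro s
    have := s.isLt
    omega
  -- per-edge identity
  have hedge : ∀ i : Fin (m+1),
      edgeCost (pathGraph (m+2)) x (pedge m i) + (g i.castSucc + g i.succ) = 2 * h i := by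
    intro i
    have ha : x.symm (Sum.inl i.castSucc) < x.symm (Sum.inr (pedge m i)) :=
      hx (pedge m i) i.castSucc (by rw [pedge_coe]; exact Sym2.mem_mk_left _ _)
    have hb : x.symm (Sum.inl i.succ) < x.symm (Sum.inr (pedge m i)) :=
      hx (pedge m i) i.succ (by rw [pedge_coe]; exact Sym2.mem_mk_right _ _)
    rw [Fin.lt_def] at ha hb
    rw [edgeCost, pedge_coe, Sym2.lift_mk]
    dsimp only
    simp only [hgdef, hhdef]
    omega
  have Hsum : (∑ i : Fin (m+1), edgeCost (pathGraph (m+2)) x (pedge m i))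
      + ((∑ i : Fin (m+1), g i.castSucc) + (∑ i : Fin (m+1), g i.succ))
      = 2 * ∑ i : Fin (m+1), h i := by
    rw [← Finset.sum_add_distrib, ← Finset.sum_add_distrib, Finset.mul_sum]
    exact Finset.sum_congr rfl fun i _ => hedge i
  have Hlo : (∑ i : Fin (m+1), g i.castSucc) + g (Fin.last (m+1)) = ∑ v : Fin (m+2), g v :=
    (Fin.sum_univ_castSucc g).symm
  have Hhi : g 0 + (∑ i : Fin (m+1), g i.succ) = ∑ v : Fin (m+2), g v :=
    (Fin.sum_univ_succ g).symm
  -- total of all positions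
  have Htot : (∑ v : Fin (m+2), g v) + (∑ i : Fin (m+1), h i)
      = ∑ j ∈ Finset.range (2*m+3), j := by
    have h1 := Equiv.sum_comp x.symm (fun k : Fin (numElts (pathGraph (m+2))) => (k : ℕ))
    rw [Fintype.sum_sum_type] at h1
    have h2 : (∑ e : (pathGraph (m+2)).edgeSet, ((x.symm (Sum.inr e) :
          Fin (numElts (pathGraph (m+2)))) : ℕ))
        = ∑ i : Fin (m+1), h i :=
      (Fintype.sum_bijective _ (pedge_bij m) _ _ fun i => rfl).symm
    have h3 : (∑ k : Fin (numElts (pathGraph (m+2))), (k : ℕ))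
        = ∑ j ∈ Finset.range (numElts (pathGraph (m+2))), j :=
      Fin.sum_univ_eq_sum_range (fun j => j) _
    have h4 : (∑ j ∈ Finset.range (numElts (pathGraph (m+2))), j)
        = ∑ j ∈ Finset.range (2*m+3), j := by rw [hNE]
    rw [h2, h3, h4] at h1
    exact h1
  have Hrange : 2 * (∑ j ∈ Finset.range (2*m+3), j) = (2*m+3) * (2*m+2) := by
    have h1 := Finset.sum_range_id_mul_two (2*m+3)
    have h2 : (2*m+3) * (2*m+3-1) = (2*m+3) * (2*m+2) := by congr 1
    omega
  -- the positions of the edges are m+1 distinct numbers below 2m+3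
  have hhinj : Function.Injective h := by
    intro a b hab
    have h1 : x.symm (Sum.inr (pedge m a)) = x.symm (Sum.inr (pedge m b)) := Fin.ext hab
    have h2 := x.symm.injective h1
    exact (pedge_bij m).1 (Sum.inr.inj h2)
  have hginj : Function.Injective g := by
    intro a b hab
    have h1 : x.symm (Sum.inl a) = x.symm (Sum.inl b) := Fin.ext hab
    have h2 := x.symm.injective h1
    exact Sum.inl.inj h2
  set sA := Finset.image h Finset.univ with hsA
  have hsAcard : sA.card = m+1 := by
    rw [hsA, Finset.card_image_of_injective _ hhinj, Finset.card_univ, Fintype.card_fin]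
  have hsAsum : ∑ j ∈ sA, j = ∑ i : Fin (m+1), h i :=
    Finset.sum_image (fun a _ b _ hab => hhinj hab)
  have hsAlt : ∀ j ∈ sA, j < 2*m+3 := by
    intro j hj
    obtain ⟨i, -, rfl⟩ := Finset.mem_image.mp hj
    exact hlt _
  have HA := twice_sum_le (2*m+3) sA hsAlt
  rw [hsAcard, hsAsum] at HA
  -- edges plus the two endpoints: m+3 distinct numbers below 2m+3
  have hg0A : g 0 ∉ sA := by
    intro hmem
    obtain ⟨i, -, hi⟩ := Finset.mem_image.mp hmem
    have h1 : x.symm (Sum.inr (pedge m i)) = x.symm (Sum.inl 0) := Fin.ext hi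
    exact absurd (x.symm.injective h1) (by simp)
  have hglA : g (Fin.last (m+1)) ∉ sA := by
    intro hmem
    obtain ⟨i, -, hi⟩ := Finset.mem_image.mp hmem
    have h1 : x.symm (Sum.inr (pedge m i)) = x.symm (Sum.inl (Fin.last (m+1))) := Fin.ext hi
    exact absurd (x.symm.injective h1) (by simp)
  have hg0l : g 0 ≠ g (Fin.last (m+1)) := by
    intro hmem
    have h0 : (0 : Fin (m+2)) = Fin.last (m+1) := hginj hmem
    have h1 := congrArg Fin.val h0
    simp [Fin.last] at h1
  set sS := insert (g 0) (insert (g (Fin.last (m+1))) sA) with hsS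
  have hg0S : g 0 ∉ insert (g (Fin.last (m+1))) sA := by
    simp only [Finset.mem_insert]
    push_neg
    exact ⟨hg0l, hg0A⟩
  have hsScard : sS.card = m+3 := by
    rw [hsS, Finset.card_insert_of_notMem hg0S, Finset.card_insert_of_notMem hglA, hsAcard]
  have hsSsum : ∑ j ∈ sS, j = g 0 + (g (Fin.last (m+1)) + ∑ i : Fin (m+1), h i) := by
    rw [hsS, Finset.sum_insert hg0S, Finset.sum_insert hglA, hsAsum]
  have hsSlt : ∀ j ∈ sS, j < 2*m+3 := by
    intro j hj
    rw [hsS, Finset.mem_insert, Finset.mem_insert] at hj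
    rcases hj with rfl | rfl | hj
    · exact hlt _
    · exact hlt _
    · exact hsAlt j hj
  have HS := twice_sum_le (2*m+3) sS hsSlt
  rw [hsScard, hsSsum] at HS
  -- put everything together
  rw [cost_eq m x]
  obtain ⟨M, hM⟩ : ∃ M, M = m * m := ⟨_, rfl⟩
  have e1 : (m+1) * (m+1) = M + 2*m + 1 := by rw [hM]; ring
  have e2 : (m+1) * (2*m+3) = 2*M + 5*m + 3 := by rw [hM]; ring
  have e3 : (m+3) * (m+3) = M + 6*m + 9 := by rw [hM]; ring
  have e4 : (m+3) * (2*m+3) = 2*M + 9*m + 9 := by rw [hM]; ring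
  have e5 : (2*m+3) * (2*m+2) = 4*M + 10*m + 6 := by rw [hM]; ring
  have e0 : 2*m*m + 6*m + 3 = 2*M + 6*m + 3 := by rw [hM]; ring
  omega

/-! ### The optimal construction sequence -/

lemma exists_cseq (m : ℕ) :
    ∃ x, IsCSeq (pathGraph (m+2)) x ∧ cost (pathGraph (m+2)) x = 2*m*m + 6*m + 3 := by
  classical
  haveI : Fintype (pathGraph (m+2)).edgeSet := Fintype.ofBijective _ (pedge_bij m)
  have hNE := numElts_path m
  set G := pathGraph (m+2) with hGdef
  set Ee : Fin (m+1) ≃ G.edgeSet := Equiv.ofBijective _ (pedge_bij m) with hEe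
  set pv : Fin (m+2) ⊕ G.edgeSet → ℕ := fun item =>
    match item with
    | Sum.inl v => if v.1 = 0 then m+1 else v.1 - 1
    | Sum.inr e => (m+2) + (Ee.symm e).1
    with hpv
  have hpvlt : ∀ item, pv item < numElts G := by
    intro item
    rw [hNE]
    rcases item with v | e
    · have := v.isLt
      simp only [hpv]
      split <;> omega
    · have := (Ee.symm e).isLt
      simp only [hpv]
      omega
  set P : Fin (m+2) ⊕ G.edgeSet → Fin (numElts G) := fun item => ⟨pv item, hpvlt item⟩
    with hP
  have hPbij : Function.Bijective P := by
    constructor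
    · rintro (a | a) (b | b) hab <;>
        simp only [hP, hpv, Fin.mk.injEq] at hab
      · have ha := a.isLt
        have hb := b.isLt
        split_ifs at hab <;>
          · congr 1
            exact Fin.ext (by omega)
      · exfalso
        have := (Ee.symm b).isLt
        have ha := a.isLt
        split_ifs at hab <;> omega
      · exfalso
        have := (Ee.symm a).isLt
        have hb := b.isLt
        split_ifs at hab <;> omega
      · congr 1
        exact Ee.symm.injective (Fin.ext (by omega))
    · intro k
      have hk : (k : ℕ) < 2*m+3 := by rw [← hNE]; exact k.isLt
      rcases Nat.lt_or_ge (k : ℕ) (m+1) with h1 | h1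
      · refine ⟨Sum.inl ⟨(k : ℕ)+1, by omega⟩, Fin.ext ?_⟩
        simp only [hP, hpv]
        split <;> omega
      rcases Nat.lt_or_ge (k : ℕ) (m+2) with h2 | h2
      · refine ⟨Sum.inl 0, Fin.ext ?_⟩
        simp only [hP, hpv]
        split <;> [omega; (rename_i hne; exact absurd (by simp) hne)]
      · refine ⟨Sum.inr (Ee ⟨(k : ℕ) - (m+2), by omega⟩), Fin.ext ?_⟩
        simp only [hP, hpv, Equiv.symm_apply_apply]
        omega
  set x : Fin (numElts G) ≃ Fin (m+2) ⊕ G.edgeSet := (Equiv.ofBijective P hPbij).symm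
    with hx
  have hxs : ∀ item, x.symm item = P item := by
    intro item
    rw [hx, Equiv.symm_symm]
    rfl
  refine ⟨x, ?_, ?_⟩
  · intro e v hv
    rw [Fin.lt_def, hxs, hxs]
    show pv (Sum.inl v) < pv (Sum.inr e)
    have hv2 : (Ee.symm e).1 ≥ 0 := Nat.zero_le _
    have := v.isLt
    simp only [hpv]
    split <;> omega
  · rw [cost_eq m x]
    have hec : ∀ i : Fin (m+1),
        edgeCost G x (pedge m i) = if i.1 = 0 then m+3 else 2*m+5 := by
      intro i
      rw [edgeCost, pedge_coe, Sym2.lift_mk]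
      dsimp only
      have h1 : (x.symm (Sum.inr (pedge m i)) : ℕ) = m+2+i.1 := by
        rw [hxs]
        show pv (Sum.inr (pedge m i)) = _
        simp only [hpv]
        rw [show pedge m i = Ee i from rfl, Equiv.symm_apply_apply]
      have h2 : (x.symm (Sum.inl i.castSucc) : ℕ) = if i.1 = 0 then m+1 else i.1 - 1 := by
        rw [hxs]
        show pv (Sum.inl i.castSucc) = _
        simp only [hpv, Fin.coe_castSucc]
      have h3 : (x.symm (Sum.inl i.succ) : ℕ) = i.1 := by
        rw [hxs]
        show pv (Sum.inl i.succ) = _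
        simp only [hpv, Fin.val_succ]
        rw [if_neg (by omega)]
        omega
      rw [h1, h2, h3]
      split_ifs <;> omega
    rw [Finset.sum_congr rfl fun i _ => hec i]
    rw [Fin.sum_univ_succ]
    have hz : ((if ((0 : Fin (m+1)) : ℕ) = 0 then m+3 else 2*m+5) : ℕ) = m+3 := if_pos rfl
    rw [hz]
    have hs : ∀ i : Fin m, ((if (Fin.succ i).1 = 0 then m+3 else 2*m+5) : ℕ) = 2*m+5 := by
      intro i
      rw [if_neg (by simp [Fin.val_succ])]
    rw [Finset.sum_congr rfl fun i _ => hs i, Finset.sum_const, Finset.card_univ,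
      Fintype.card_fin, smul_eq_mul]
    ring

/-- `ν*(P_n) = 2n² − 2n − 1` for `n ≥ 2`, where `P_n` is the path with `n` vertices. -/
theorem maxCost_path (n : ℕ) (hn : 2 ≤ n) :
    maxCost (SimpleGraph.pathGraph n) = 2 * n ^ 2 - 2 * n - 1 := by
  obtain ⟨m, rfl⟩ : ∃ m, n = m + 2 := ⟨n - 2, by omega⟩
  have hgoal : 2 * (m+2) ^ 2 - 2 * (m+2) - 1 = 2*m*m + 6*m + 3 := by
    have h1 : (m+2) ^ 2 = m*m + 4*m + 4 := by ring
    have h2 : 2*m*m = 2*(m*m) := by ring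
    omega
  rw [hgoal, maxCost]
  obtain ⟨x, hx, hcx⟩ := exists_cseq m
  have hmem : (2*m*m + 6*m + 3) ∈ {c | ∃ x, IsCSeq (pathGraph (m+2)) x
      ∧ cost (pathGraph (m+2)) x = c} := ⟨x, hx, hcx⟩
  apply le_antisymm
  · apply csSup_le ⟨_, hmem⟩
    rintro c ⟨y, hy, rfl⟩
    exact cost_le m y hy
  · apply le_csSup ⟨2*m*m + 6*m + 3, ?_⟩ hmem
    rintro c ⟨y, hy, rfl⟩
    exact cost_le m y hy

end ConsCost
end

section
/- Among trees with n vertices, the path and the star are extremal for maximum construction cost: if T is a tree with n vertices (n ≥ 2), then ν*(P_n) ≤ ν*(T) ≤ ν*(K_{1,n−1}), i.e. 2n² − 2n − 1 ≤ ν*(T) ≤ (5(n−1)² + (n−1))/2. -/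
namespace ConsCost

open Finset

variable {V : Type*} [Fintype V]

/-- weighted handshake -/
lemma weighted_handshake (G : SimpleGraph V) [DecidableRel G.Adj] [DecidableEq V] (f : V → ℕ) :
    ∑ e ∈ G.edgeFinset, Sym2.lift ⟨fun u w => f u + f w, fun u w => by dsimp only; omega⟩ e
      = ∑ v, G.degree v * f v := by
  have h1 : ∑ d : G.Dart, f d.fst = ∑ v, G.degree v * f v := by
    rw [← Finset.sum_fiberwise_of_maps_to (g := fun d : G.Dart => d.fst) (t := Finset.univ)
      (fun d _ => mem_univ _)]
    refine Finset.sum_congr rfl fun v _ => ?_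
    have hc : ∀ d ∈ filter (fun d : G.Dart => d.fst = v) univ, f d.fst = f v := fun d hd => by
      rw [(mem_filter.mp hd).2]
    rw [Finset.sum_congr rfl hc, sum_const, smul_eq_mul, ← G.dart_fst_fiber_card_eq_degree v]
  have h2 : ∑ d : G.Dart, f d.fst = ∑ e ∈ G.edgeFinset,
      Sym2.lift ⟨fun u w => f u + f w, fun u w => by dsimp only; omega⟩ e := by
    rw [← Finset.sum_fiberwise_of_maps_to (g := fun d : G.Dart => d.edge) (t := G.edgeFinset)
      (fun d _ => by rw [SimpleGraph.mem_edgeFinset]; exact d.edge_mem)]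
    refine Finset.sum_congr rfl fun e he => ?_
    rw [SimpleGraph.mem_edgeFinset] at he
    induction e with
    | _ u w =>
      have ha : G.Adj u w := he
      set d : G.Dart := ⟨(u, w), ha⟩ with hdd
      have hfib : filter (fun d' : G.Dart => d'.edge = s(u, w)) univ = {d, d.symm} := by
        have := d.edge_fiber
        convert this using 2
        exact Iff.rfl
      rw [hfib, Finset.sum_pair d.symm_ne.symm]
      simp [SimpleGraph.Dart.symm, d.edge_fiber]
      rfl
  omega

lemma lemB : ∀ (n : ℕ) (e : ℕ → ℕ), (∀ i j, i ≤ j → j < n → e j ≤ e i) →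
    2 * ∑ i ∈ range n, i * e i ≤ (∑ i ∈ range n, e i) * ((∑ i ∈ range n, e i) - 1) := by
  intro n
  induction n with
  | zero => simp
  | succ n ih =>
    intro e hanti
    have IH := ih e (fun i j hij hj => hanti i j hij (by omega))
    have hge : n * e n ≤ ∑ i ∈ range n, e i := by
      calc n * e n = ∑ _i ∈ range n, e n := by rw [sum_const, card_range, smul_eq_mul]
        _ ≤ _ := sum_le_sum fun i hi => hanti i n (le_of_lt (mem_range.mp hi)) (by omega)
    rw [sum_range_succ, sum_range_succ]
    set S := ∑ i ∈ range n, i * e i with hS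
    set m' := ∑ i ∈ range n, e i with hm'
    clear_value S m'
    rcases Nat.eq_zero_or_pos (e n) with h0 | h1
    · rw [h0]; simpa using IH
    · rcases Nat.eq_zero_or_pos n with hn0 | hn1
      · subst hn0; simp only [range_zero, sum_empty] at hS; omega
      · have hm1 : 1 ≤ m' := le_trans (by nlinarith) hge
        zify [show (1:ℕ) ≤ m' + e n by omega, hm1] at *
        nlinarith

lemma lemD {V : Type*} [DecidableEq V] : ∀ (k : ℕ) (s : Finset V) (g : V → ℕ), s.card = k →
    Set.InjOn g s → k * (k - 1) ≤ 2 * ∑ v ∈ s, g v := by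
  intro k
  induction k with
  | zero => simp
  | succ k ih =>
    intro s g hcard hinj
    have hne : s.Nonempty := by rw [← Finset.card_pos, hcard]; omega
    have himg : (s.image g).card = k + 1 := by rw [Finset.card_image_of_injOn hinj, hcard]
    have hne' : (s.image g).Nonempty := by rw [← Finset.card_pos, himg]; omega
    set M := (s.image g).max' hne' with hM
    have hMmem : M ∈ s.image g := Finset.max'_mem _ _
    have hsub : s.image g ⊆ range (M + 1) := fun a ha => by
      rw [mem_range]; exact Nat.lt_succ_of_le (Finset.le_max' _ _ ha)
    have hMk : k ≤ M := by
      have := Finset.card_le_card hsub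
      rw [himg, card_range] at this; omega
    obtain ⟨v, hv, hgv⟩ := Finset.mem_image.mp hMmem
    have hIH := ih (s.erase v) g (by rw [Finset.card_erase_of_mem hv, hcard]; rfl)
      (hinj.mono (fun x hx => Finset.mem_of_mem_erase hx))
    rw [← Finset.add_sum_erase _ _ hv]
    have : k ≤ g v := by omega
    have h3 : (k+1)*(k+1-1) = k*(k-1) + 2*k := by
      cases k with
      | zero => rfl
      | succ k => simp only [Nat.add_sub_cancel]; ring
    omega

section Main

variable (T : SimpleGraph V) [DecidableRel T.Adj] [DecidableEq V]

/-- the master cost formula for construction sequences -/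
lemma cost_formula (x : Fin (numElts T) ≃ V ⊕ T.edgeSet) (hx : IsCSeq T x) :
    cost T x + ∑ v, T.degree v * (x.symm (Sum.inl v) : ℕ)
      = 2 * ∑ e : T.edgeSet, (x.symm (Sum.inr e) : ℕ) := by
  have hub : ∀ e : T.edgeSet,
      Sym2.lift ⟨fun u w => ((x.symm (Sum.inl u) : ℕ) + (x.symm (Sum.inl w) : ℕ)),
        fun u w => by dsimp only; omega⟩ (e : Sym2 V) ≤ 2 * (x.symm (Sum.inr e) : ℕ) := by
    rintro ⟨e, he⟩
    induction e with
    | _ u w =>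
      simp only [Sym2.lift_mk]
      have h1 := hx ⟨s(u, w), he⟩ u (Sym2.mem_mk_left u w)
      have h2 := hx ⟨s(u, w), he⟩ w (Sym2.mem_mk_right u w)
      rw [Fin.lt_def] at h1 h2
      omega
  have hhs : ∑ v, T.degree v * (x.symm (Sum.inl v) : ℕ)
      = ∑ e : T.edgeSet,
        Sym2.lift ⟨fun u w => ((x.symm (Sum.inl u) : ℕ) + (x.symm (Sum.inl w) : ℕ)),
          fun u w => by dsimp only; omega⟩ (e : Sym2 V) := by
    rw [← weighted_handshake T (fun v => (x.symm (Sum.inl v) : ℕ)), Finset.sum_set_coe]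
    exact Finset.sum_congr (by ext; simp) fun _ _ => rfl
  rw [cost, finsum_eq_sum_of_fintype, hhs, ← Finset.sum_add_distrib, Finset.mul_sum]
  refine Finset.sum_congr rfl fun e _ => ?_
  rw [edgeCost, Nat.sub_add_cancel (hub e)]

end Main

/-- Among trees with `n ≥ 2` vertices, the path and the star are extremal for
maximum construction cost: `2n² − 2n − 1 ≤ ν*(T)` and `ν*(T) ≤ (5(n−1)² + (n−1))/2`. -/
theorem tree_maxCost_bounds {V : Type*} [Fintype V] (T : SimpleGraph V)
    (hT : T.IsTree) (n : ℕ) (hn : 2 ≤ n) (hcard : Fintype.card V = n) :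
    2 * n ^ 2 - 2 * n - 1 ≤ maxCost T ∧
      2 * maxCost T ≤ 5 * (n - 1) ^ 2 + (n - 1) := by
  classical
  -- edge counts
  have hec : T.edgeFinset.card = n - 1 := by
    have := hT.card_edgeFinset
    omega
  have hecard : Fintype.card T.edgeSet = n - 1 := by
    rw [← Set.toFinset_card]; exact hec
  have hnum : numElts T = n + (n - 1) := by
    rw [numElts, hcard, Nat.card_eq_fintype_card, hecard]
  -- minimum degree ≥ 1
  have hdeg : ∀ v : V, 1 ≤ T.degree v := by
    intro v
    obtain ⟨w, hw⟩ := Fintype.exists_ne_of_one_lt_card (by omega) v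
    obtain ⟨W⟩ := hT.isConnected.preconnected v w
    rw [Nat.one_le_iff_ne_zero, ← Nat.pos_iff_ne_zero, T.degree_pos_iff_exists_adj]
    cases W with
    | nil => exact absurd rfl hw
    | cons h p => exact ⟨_, h⟩
  obtain ⟨k, rfl⟩ : ∃ k, n = k + 2 := ⟨n - 2, by omega⟩
  -- total position sum
  have htotal : ∀ x : Fin (numElts T) ≃ V ⊕ T.edgeSet,
      2 * (∑ v, ((x.symm (Sum.inl v) : ℕ)) + ∑ e : T.edgeSet, ((x.symm (Sum.inr e) : ℕ)))
        = numElts T * (numElts T - 1) := by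
    intro x
    have h1 : ∑ z : V ⊕ T.edgeSet, ((x.symm z : ℕ)) = ∑ i : Fin (numElts T), (i : ℕ) :=
      Equiv.sum_comp x.symm fun i => (i : ℕ)
    rw [Fintype.sum_sum_type] at h1
    rw [h1, Fin.sum_univ_eq_sum_range (fun i => i), mul_comm, Finset.sum_range_id_mul_two]
  -- vertex position sums are at least 0+1+...+(n-1)
  have hPl : ∀ x : Fin (numElts T) ≃ V ⊕ T.edgeSet,
      (k+2) * (k+1) ≤ 2 * ∑ v, ((x.symm (Sum.inl v) : ℕ)) := by
    intro x
    have := lemD (k+2) (univ : Finset V) (fun v => ((x.symm (Sum.inl v) : ℕ)))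
      (by rw [Finset.card_univ, hcard]) ?_
    · simpa using this
    · intro a _ b _ hab
      exact Sum.inl_injective (x.symm.injective (Fin.val_injective hab))
  have hDl : ∀ x : Fin (numElts T) ≃ V ⊕ T.edgeSet,
      ∑ v, ((x.symm (Sum.inl v) : ℕ)) ≤ ∑ v, T.degree v * ((x.symm (Sum.inl v) : ℕ)) :=
    fun x => Finset.sum_le_sum fun v _ => Nat.le_mul_of_pos_left _ (hdeg v)
  -- the generic upper bound for any construction sequence
  have hupper : ∀ x, IsCSeq T x → 2 * cost T x ≤ 5 * (k + 2 - 1) ^ 2 + (k + 2 - 1) := by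
    intro x hx
    have hf := cost_formula T x hx
    have ht := htotal x
    have hP := hPl x
    have hD := hDl x
    set P := ∑ v, ((x.symm (Sum.inl v) : ℕ)) with hPdef
    set Q := ∑ e : T.edgeSet, ((x.symm (Sum.inr e) : ℕ)) with hQdef
    set D := ∑ v, T.degree v * ((x.symm (Sum.inl v) : ℕ)) with hDdef
    have r1 : numElts T * (numElts T - 1) = 4*(k*k) + 10*k + 6 := by
      rw [hnum]
      have h5 : k+2+(k+2-1) = 2*k+3 := by omega
      rw [h5]
      have h6 : 2*k+3-1 = 2*k+2 := by omega
      rw [h6]; ring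
    have r2 : 5 * (k + 2 - 1) ^ 2 + (k + 2 - 1) = 5*(k*k) + 11*k + 6 := by
      have : k + 2 - 1 = k + 1 := by omega
      rw [this]; ring
    have r3 : (k+2)*(k+1) = k*k + 3*k + 2 := by ring
    omega
  -- construct the degree-sorted construction sequence
  let e0 : Fin (k+2) ≃ V := (Fintype.equivFinOfCardEq hcard).symm
  let f0 : Fin (k+2) → ℕ := fun i => T.degree (e0 i)
  let σ : Fin (k+2) ≃ V := (Fin.revPerm.trans (Tuple.sort f0)).trans e0
  have hσanti : ∀ i j : Fin (k+2), i ≤ j → T.degree (σ j) ≤ T.degree (σ i) := by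
    intro i j hij
    exact Tuple.monotone_sort f0 (Fin.rev_le_rev.mpr hij)
  have hecard' : Fintype.card T.edgeSet = k + 1 := by omega
  have hnum' : numElts T = (k + 2) + (k + 1) := by omega
  let τ : Fin (k+1) ≃ T.edgeSet := (Fintype.equivFinOfCardEq hecard').symm
  let x₀ : Fin (numElts T) ≃ V ⊕ T.edgeSet :=
    (finCongr hnum').trans (finSumFinEquiv.symm.trans (Equiv.sumCongr σ τ))
  have hvl : ∀ v : V, (x₀.symm (Sum.inl v) : ℕ) = (σ.symm v : ℕ) := by
    intro v
    simp [x₀, Equiv.symm_trans_apply, finSumFinEquiv_apply_left]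
  have hvr : ∀ e : T.edgeSet, (x₀.symm (Sum.inr e) : ℕ) = (k+2) + (τ.symm e : ℕ) := by
    intro e
    simp [x₀, Equiv.symm_trans_apply, finSumFinEquiv_apply_right]
  have hcs : IsCSeq T x₀ := by
    intro e v _
    rw [Fin.lt_def, hvl, hvr]
    have := (σ.symm v).isLt
    omega
  -- the cost of x₀
  have hQ0 : 2 * ∑ e : T.edgeSet, ((x₀.symm (Sum.inr e) : ℕ))
      = 2 * ((k+2) * (k+1)) + (k+1)*k := by
    have h1 : ∑ e : T.edgeSet, ((x₀.symm (Sum.inr e) : ℕ))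
        = ∑ j : Fin (k+1), ((k+2) + (j : ℕ)) := by
      rw [Finset.sum_congr rfl fun e _ => hvr e]
      exact Equiv.sum_comp τ.symm fun j : Fin (k+1) => (k+2) + (j : ℕ)
    rw [h1, Finset.sum_add_distrib, Finset.sum_const, Finset.card_univ, Fintype.card_fin,
      Fin.sum_univ_eq_sum_range (fun i => i), smul_eq_mul]
    have h2 := Finset.sum_range_id_mul_two (k+1)
    have e2 : (k+1)*(k+1-1) = (k+1)*k := by rw [show k+1-1 = k from by omega]
    have e1 : (k+1)*(k+2) = (k+2)*(k+1) := by ring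
    omega
  -- the degree-weighted sum for x₀
  let d : ℕ → ℕ := fun m => if h : m < k + 2 then T.degree (σ ⟨m, h⟩) else 1
  have hdeq : ∀ i : Fin (k+2), d (i : ℕ) = T.degree (σ i) := by
    intro i
    simp only [d, dif_pos i.isLt]
  have hD0 : ∑ v, T.degree v * ((x₀.symm (Sum.inl v) : ℕ)) = ∑ i ∈ range (k+2), i * d i := by
    rw [Finset.sum_congr rfl fun v _ => by rw [hvl v]]
    have h1 : ∑ v, T.degree v * ((σ.symm v : ℕ))
        = ∑ i : Fin (k+2), T.degree (σ i) * ((σ.symm (σ i) : ℕ)) :=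
      (Equiv.sum_comp σ fun v => T.degree v * ((σ.symm v : ℕ))).symm
    rw [h1]
    rw [← Fin.sum_univ_eq_sum_range (fun m => m * d m) (k+2)]
    refine Finset.sum_congr rfl fun i _ => ?_
    rw [Equiv.symm_apply_apply, hdeq i, mul_comm]
  have hdanti : ∀ i j, i ≤ j → j < k + 2 → d j ≤ d i := by
    intro i j hij hj
    have hi : i < k + 2 := lt_of_le_of_lt hij hj
    simp only [d, dif_pos hi, dif_pos hj]
    exact hσanti ⟨i, hi⟩ ⟨j, hj⟩ hij
  have hd1 : ∀ i, i < k + 2 → 1 ≤ d i := by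
    intro i hi
    simp only [d, dif_pos hi]
    exact hdeg _
  have hdsum : ∑ i ∈ range (k+2), d i = 2 * (k + 1) := by
    have h1 : ∑ i ∈ range (k+2), d i = ∑ i : Fin (k+2), T.degree (σ i) := by
      rw [← Fin.sum_univ_eq_sum_range d (k+2)]
      exact Finset.sum_congr rfl fun i _ => hdeq i
    have h2 : ∑ i : Fin (k+2), T.degree (σ i) = ∑ v, T.degree v :=
      Equiv.sum_comp σ (fun v => T.degree v)
    rw [h1, h2, T.sum_degrees_eq_twice_card_edges, hec]
    omega
  -- bound the degree-weighted sum
  have hkey : 2 * ∑ i ∈ range (k+2), i * d i ≤ (k+2)*(k+1) + k*(k-1) := by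
    have hsplit : ∑ i ∈ range (k+2), i * d i
        = ∑ i ∈ range (k+2), i * (d i - 1) + ∑ i ∈ range (k+2), i := by
      rw [← Finset.sum_add_distrib]
      refine Finset.sum_congr rfl fun i hi => ?_
      have := hd1 i (mem_range.mp hi)
      have hdi : d i = (d i - 1) + 1 := by omega
      calc i * d i = i * ((d i - 1) + 1) := by rw [← hdi]
        _ = i * (d i - 1) + i := by ring
    have hesum : ∑ i ∈ range (k+2), (d i - 1) = k := by
      have h1 : ∑ i ∈ range (k+2), d i = ∑ i ∈ range (k+2), ((d i - 1) + 1) :=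
        Finset.sum_congr rfl fun i hi => by have := hd1 i (mem_range.mp hi); omega
      rw [Finset.sum_add_distrib, Finset.sum_const, card_range, smul_eq_mul] at h1
      omega
    have hB : 2 * ∑ i ∈ range (k+2), i * (d i - 1) ≤ k * (k - 1) := by
      have h6 := lemB (k+2) (fun i => d i - 1) (fun i j hij hj => by
        show d j - 1 ≤ d i - 1
        have := hdanti i j hij hj; omega)
      simp only [hesum] at h6
      exact h6
    have hgauss := Finset.sum_range_id_mul_two (k+2)
    have h4 : k + 2 - 1 = k + 1 := by omega
    rw [h4] at hgauss
    rw [hsplit]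
    have h5 : k - 1 ≤ k := Nat.sub_le k 1
    omega
  -- conclude
  have hform := cost_formula T x₀ hcs
  rw [hD0, hQ0] at hform
  have hcost : 2 * (k*k) + 6 * k + 3 ≤ cost T x₀ := by
    have r3 : (k+2)*(k+1) = k*k + 3*k + 2 := by ring
    have r5 : (k+1)*k = k*k + k := by ring
    have r6 : k*(k-1) + k = k*k := by
      cases k with
      | zero => rfl
      | succ j => simp only [Nat.succ_sub_one]; ring
    omega
  -- boundedness and membership
  have hbdd : BddAbove {c | ∃ x, IsCSeq T x ∧ cost T x = c} := by
    refine ⟨Fintype.card T.edgeSet * (2 * numElts T), ?_⟩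
    rintro c ⟨x, _, rfl⟩
    rw [cost, finsum_eq_sum_of_fintype]
    calc ∑ e : T.edgeSet, edgeCost T x e
        ≤ ∑ _e : T.edgeSet, 2 * numElts T := Finset.sum_le_sum fun e _ => by
          refine le_trans (Nat.sub_le _ _) ?_
          have := (x.symm (Sum.inr e)).isLt
          omega
      _ = Fintype.card T.edgeSet * (2 * numElts T) := by
          rw [Finset.sum_const, Finset.card_univ, smul_eq_mul]
  have hmem : cost T x₀ ∈ {c | ∃ x, IsCSeq T x ∧ cost T x = c} := ⟨x₀, hcs, rfl⟩
  constructor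
  · have h1 : cost T x₀ ≤ maxCost T := le_csSup hbdd hmem
    have r4 : 2*(k+2)^2 = 2*(k*k)+8*k+8 := by ring
    have : 2 * (k + 2) ^ 2 - 2 * (k + 2) - 1 ≤ cost T x₀ := by omega
    exact le_trans this h1
  · have hmax : maxCost T ∈ {c | ∃ x, IsCSeq T x ∧ cost T x = c} :=
      Nat.sSup_mem ⟨_, hmem⟩ hbdd
    obtain ⟨x, hx, hcx⟩ := hmax
    rw [maxCost] at *
    rw [← hcx]
    exact hupper x hx

end ConsCost
end

section
/- Maximum construction cost of the disjoint union of regular graphs of distinct degrees: if G_1 is an r_1-regular finite simple graph with p_1 vertices and q_1 edges, G_2 is an r_2-regular finite simple graph with p_2 vertices and q_2 edges, and r_1 > r_2, then ν*(G_1 ⊔ G_2) = ν*(G_1) + ν*(G_2) + 2·q_1·(p_2 + q_2), where G_1 ⊔ G_2 is the disjoint union. -/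
namespace ConsCost

variable {V : Type*} [Fintype V]

/-! ### Auxiliary arithmetic lemmas -/

/-- triangular number -/
def tri (n : ℕ) : ℕ := ∑ i ∈ Finset.range n, i

lemma tri_add (a b : ℕ) : tri (a + b) = tri a + tri b + a * b := by
  induction b with
  | zero => simp [tri]
  | succ n ih =>
    have : a + (n+1) = (a+n) + 1 := by omega
    rw [this]
    unfold tri at *
    rw [Finset.sum_range_succ, show (n+1)=n+1 from rfl,
      Finset.sum_range_succ (f := fun i => i) (n := n), ih, Nat.mul_succ]
    omega

lemma tri_card_le_sum (s : Finset ℕ) : tri s.card ≤ ∑ i ∈ s, i := by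
  induction s using Finset.strongInduction with
  | _ s ih =>
    rcases s.eq_empty_or_nonempty with rfl | hs
    · simp [tri]
    · have hmax := s.max'_mem hs
      set m := s.max' hs with hm
      have h1 : s.erase m ⊂ s := Finset.erase_ssubset hmax
      have hc : s.card = (s.erase m).card + 1 := by
        rw [Finset.card_erase_of_mem hmax]
        have := Finset.card_pos.2 hs; omega
      have hle : (s.erase m).card ≤ m := by
        have hsub : s.erase m ⊆ Finset.range m := by
          intro i hi
          rw [Finset.mem_range]
          exact lt_of_le_of_ne (s.le_max' i (Finset.mem_of_mem_erase hi))
            (Finset.ne_of_mem_erase hi)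
        simpa using Finset.card_le_card hsub
      have h2 := ih _ h1
      have hsum : ∑ i ∈ s, i = m + ∑ i ∈ s.erase m, i := (Finset.add_sum_erase _ _ hmax).symm
      rw [hc, hsum]
      unfold tri at *
      rw [Finset.sum_range_succ]
      omega

lemma tri_le_sum_of_inj {α : Type*} [Fintype α] (f : α → ℕ) (hf : Function.Injective f) :
    tri (Fintype.card α) ≤ ∑ a, f a := by
  classical
  have h1 : ∑ a, f a = ∑ i ∈ Finset.univ.image f, i := by
    rw [Finset.sum_image (by intro x _ y _ h; exact hf h)]
  have h2 : (Finset.univ.image f).card = Fintype.card α := by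
    rw [Finset.card_image_of_injective _ hf, Finset.card_univ]
  rw [h1, ← h2]
  exact tri_card_le_sum _

lemma sum_le_of_inj {α : Type*} [Fintype α] (f : α → ℕ) (hf : Function.Injective f)
    {m k : ℕ} (hk : Fintype.card α = k) (hn : ∀ a, f a < m + k) :
    ∑ a, f a ≤ m * k + tri k := by
  classical
  set s := Finset.univ.image f with hs
  have hcs : s.card = k := by rw [hs, Finset.card_image_of_injective _ hf, Finset.card_univ, hk]
  have hsum : ∑ a, f a = ∑ i ∈ s, i := by
    rw [hs, Finset.sum_image (by intro x _ y _ h; exact hf h)]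
  have hsub : s ⊆ Finset.range (m + k) := by
    intro i hi
    rw [hs, Finset.mem_image] at hi
    obtain ⟨a, _, rfl⟩ := hi
    exact Finset.mem_range.2 (hn a)
  have h2 : ∑ i ∈ Finset.range (m+k) \ s, i + ∑ i ∈ s, i = ∑ i ∈ Finset.range (m+k), i :=
    Finset.sum_sdiff hsub
  have h3 : tri (Finset.range (m+k) \ s).card ≤ ∑ i ∈ Finset.range (m+k) \ s, i :=
    tri_card_le_sum _
  have hcard : (Finset.range (m+k) \ s).card = m := by
    rw [Finset.card_sdiff_of_subset hsub, Finset.card_range, hcs]; omega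
  have h4 := tri_add m k
  have h5 : ∑ i ∈ Finset.range (m+k), i = tri (m+k) := rfl
  rw [hcard] at h3
  omega

lemma sum_equiv_val {α : Type*} [Fintype α] {n : ℕ} (σ : Fin n ≃ α) :
    ∑ a, (σ.symm a : ℕ) = tri n := by
  rw [← Equiv.sum_comp σ (fun a => (σ.symm a : ℕ))]
  simp only [Equiv.symm_apply_apply]
  rw [Fin.sum_univ_eq_sum_range (fun j => j)]
  rfl

/-! ### Weighted handshake via darts -/

section Handshake

variable (G : SimpleGraph V) [DecidableRel G.Adj]

lemma dart_sum_eq_degree_sum (f : V → ℕ) :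
    ∑ d : G.Dart, f d.toProd.1 = ∑ v, G.degree v * f v := by
  classical
  rw [← Finset.sum_fiberwise_of_maps_to (g := fun d : G.Dart => d.toProd.1)
    (t := Finset.univ) (fun d _ => Finset.mem_univ _)]
  refine Finset.sum_congr rfl fun v _ => ?_
  have h1 : ∀ d ∈ Finset.univ.filter (fun d : G.Dart => d.toProd.1 = v),
      f d.toProd.1 = f v := by
    intro d hd
    rw [Finset.mem_filter] at hd
    rw [hd.2]
  rw [Finset.sum_congr rfl h1, Finset.sum_const, smul_eq_mul]
  congr 1
  exact G.dart_fst_fiber_card_eq_degree v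

lemma edge_sum_eq_dart_sum [Fintype G.edgeSet] (f : V → ℕ) :
    ∑ e : G.edgeSet, Sym2.lift ⟨fun u w => f u + f w, fun u w => by dsimp only; omega⟩
      (e : Sym2 V) = ∑ d : G.Dart, f d.toProd.1 := by
  classical
  rw [← Finset.sum_fiberwise_of_maps_to (g := fun d : G.Dart => d.edge)
    (t := G.edgeSet.toFinset) (fun d _ => Set.mem_toFinset.2 d.edge_mem)]
  rw [Finset.sum_set_coe (s := G.edgeSet)
    (f := fun e => Sym2.lift ⟨fun u w => f u + f w, fun u w => by dsimp only; omega⟩ e)]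
  refine Finset.sum_congr rfl fun e he => ?_
  rw [Set.mem_toFinset] at he
  revert he
  induction e using Sym2.ind with
  | _ u w =>
    intro he
    rw [SimpleGraph.mem_edgeSet] at he
    have hd : (⟨(u, w), he⟩ : G.Dart).edge = s(u, w) := rfl
    have hfib : (Finset.univ.filter fun d : G.Dart => d.edge = s(u, w)) =
        {(⟨(u, w), he⟩ : G.Dart), (⟨(u, w), he⟩ : G.Dart).symm} := by
      rw [← hd]
      exact SimpleGraph.Dart.edge_fiber _
    rw [hfib, Finset.sum_pair (SimpleGraph.Dart.symm_ne _).symm]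
    simp [Sym2.lift_mk, SimpleGraph.Dart.symm]

lemma two_mul_card_edgeSet [Fintype G.edgeSet] :
    2 * Fintype.card G.edgeSet = Fintype.card G.Dart := by
  have h := edge_sum_eq_dart_sum G (fun _ => 1)
  have h0 : ∀ z : Sym2 V,
      Sym2.lift ⟨fun _ _ => (1:ℕ) + 1, fun u w => rfl⟩ z = 2 := by
    intro z
    induction z using Sym2.ind with
    | _ u w => exact Sym2.lift_mk _ _ _
  have h1 : ∀ e : G.edgeSet,
      Sym2.lift ⟨fun _ _ => (1:ℕ) + 1, fun u w => rfl⟩ (e : Sym2 V) = 2 :=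
    fun e => h0 e
  simp only [h1, Finset.sum_const, Finset.card_univ, smul_eq_mul] at h
  simpa [mul_comm] using h

end Handshake

/-! ### Cost identities -/

section CostEq

variable (G : SimpleGraph V) [Fintype G.edgeSet]

omit [Fintype G.edgeSet] in
lemma edgeCost_add {x : Fin (numElts G) ≃ V ⊕ G.edgeSet} (hx : IsCSeq G x) (e : G.edgeSet) :
    edgeCost G x e +
      Sym2.lift ⟨fun u w => ((x.symm (Sum.inl u) : ℕ) + (x.symm (Sum.inl w) : ℕ)),
        fun u w => by dsimp only; omega⟩ (e : Sym2 V) = 2 * (x.symm (Sum.inr e) : ℕ) := by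
  have h := hx e
  unfold edgeCost
  obtain ⟨e', he'⟩ := e
  induction e' using Sym2.ind with
  | _ u w =>
    have hu := h u (by simp)
    have hw := h w (by simp)
    rw [Fin.lt_def] at hu hw
    rw [Sym2.lift_mk]
    dsimp only at hu hw ⊢
    omega

lemma cost_add_eq {x : Fin (numElts G) ≃ V ⊕ G.edgeSet} (hx : IsCSeq G x) :
    cost G x + ∑ e : G.edgeSet,
      Sym2.lift ⟨fun u w => ((x.symm (Sum.inl u) : ℕ) + (x.symm (Sum.inl w) : ℕ)),
        fun u w => by dsimp only; omega⟩ (e : Sym2 V)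
    = 2 * ∑ e : G.edgeSet, (x.symm (Sum.inr e) : ℕ) := by
  unfold cost
  rw [finsum_eq_sum_of_fintype, ← Finset.sum_add_distrib, Finset.mul_sum]
  exact Finset.sum_congr rfl fun e _ => edgeCost_add G hx e

lemma pos_total (x : Fin (numElts G) ≃ V ⊕ G.edgeSet) :
    ∑ v, (x.symm (Sum.inl v) : ℕ) + ∑ e : G.edgeSet, (x.symm (Sum.inr e) : ℕ)
      = tri (numElts G) := by
  have h1 : ∑ s : V ⊕ G.edgeSet, (x.symm s : ℕ) = ∑ i : Fin (numElts G), (i : ℕ) := by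
    rw [← Equiv.sum_comp x (fun s => (x.symm s : ℕ))]
    simp
  rw [Fintype.sum_sum_type] at h1
  rw [h1, Fin.sum_univ_eq_sum_range (fun j => j)]
  rfl

lemma exists_cseq_s10 (σ : Fin (Fintype.card V) ≃ V) :
    ∃ x : Fin (numElts G) ≃ V ⊕ G.edgeSet, IsCSeq G x ∧
      (∀ v, (x.symm (Sum.inl v) : ℕ) = (σ.symm v : ℕ)) ∧
      ∑ e : G.edgeSet, (x.symm (Sum.inr e) : ℕ)
        = Nat.card G.edgeSet * Fintype.card V + tri (Nat.card G.edgeSet) := by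
  have hq : Nat.card G.edgeSet = Fintype.card G.edgeSet := Nat.card_eq_fintype_card
  let τ : Fin (Nat.card G.edgeSet) ≃ G.edgeSet :=
    (finCongr hq).trans (Fintype.equivFin G.edgeSet).symm
  refine ⟨(finSumFinEquiv.symm.trans (σ.sumCongr τ) :
    Fin (Fintype.card V + Nat.card G.edgeSet) ≃ V ⊕ G.edgeSet), ?_, ?_, ?_⟩
  · intro e v _
    show (finSumFinEquiv.symm.trans (σ.sumCongr τ)).symm _ <
      (finSumFinEquiv.symm.trans (σ.sumCongr τ)).symm _
    simp only [Equiv.symm_trans_apply, Equiv.symm_symm, Equiv.sumCongr_symm,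
      Equiv.sumCongr_apply, Sum.map_inl, Sum.map_inr, finSumFinEquiv_apply_left,
      finSumFinEquiv_apply_right]
    rw [Fin.lt_def]
    simp only [Fin.coe_castAdd, Fin.coe_natAdd]
    exact lt_of_lt_of_le (σ.symm v).isLt (Nat.le_add_right _ _)
  · intro v
    have h : (((finSumFinEquiv.symm.trans (σ.sumCongr τ)).symm (Sum.inl v) :
        Fin (Fintype.card V + Nat.card G.edgeSet)) : ℕ) = (σ.symm v : ℕ) := by
      simp only [Equiv.symm_trans_apply, Equiv.symm_symm, Equiv.sumCongr_symm, Equiv.sumCongr_apply, Sum.map_inl, Sum.map_inr, finSumFinEquiv_apply_left, finSumFinEquiv_apply_right, Fin.coe_castAdd, Fin.coe_natAdd]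
    exact h
  · have h1 : ∀ e : G.edgeSet,
        (((finSumFinEquiv.symm.trans (σ.sumCongr τ)).symm (Sum.inr e) :
          Fin (Fintype.card V + Nat.card G.edgeSet)) : ℕ)
          = Fintype.card V + (τ.symm e : ℕ) := by
      intro e
      simp only [Equiv.symm_trans_apply, Equiv.symm_symm, Equiv.sumCongr_symm, Equiv.sumCongr_apply, Sum.map_inl, Sum.map_inr, finSumFinEquiv_apply_left, finSumFinEquiv_apply_right, Fin.coe_castAdd, Fin.coe_natAdd]
    have h2 : ∑ e : G.edgeSet, (((finSumFinEquiv.symm.trans (σ.sumCongr τ)).symm (Sum.inr e) :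
          Fin (Fintype.card V + Nat.card G.edgeSet)) : ℕ)
        = Nat.card G.edgeSet * Fintype.card V + tri (Nat.card G.edgeSet) := by
      simp only [h1]
      rw [Finset.sum_add_distrib, Finset.sum_const, Finset.card_univ, smul_eq_mul]
      have h3 : ∑ e : G.edgeSet, (τ.symm e : ℕ)
          = ∑ i : Fin (Nat.card G.edgeSet), (i : ℕ) := by
        rw [← Equiv.sum_comp τ (fun e => (τ.symm e : ℕ))]
        exact Finset.sum_congr rfl fun i _ => by rw [Equiv.symm_apply_apply]
      rw [h3, Fin.sum_univ_eq_sum_range (fun j => j), ← hq]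
      unfold tri
      ring
    exact h2

end CostEq

/-! ### The maximum cost of a regular graph -/

lemma maxCost_regular (G : SimpleGraph V) [DecidableRel G.Adj] {r : ℕ}
    (h : G.IsRegularOfDegree r) :
    maxCost G + r * tri (Fintype.card V)
      = 2 * (Nat.card G.edgeSet * Fintype.card V + tri (Nat.card G.edgeSet)) := by
  haveI : Fintype G.edgeSet := Fintype.ofFinite _
  have hq : Nat.card G.edgeSet = Fintype.card G.edgeSet := Nat.card_eq_fintype_card
  obtain ⟨x₀, hx₀, hv₀, he₀⟩ := exists_cseq_s10 G (Fintype.equivFin V).symm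
  -- lift-sum for any sequence
  have hlift : ∀ x : Fin (numElts G) ≃ V ⊕ G.edgeSet,
      ∑ e : G.edgeSet,
        Sym2.lift ⟨fun u w => ((x.symm (Sum.inl u) : ℕ) + (x.symm (Sum.inl w) : ℕ)),
          fun u w => by dsimp only; omega⟩ (e : Sym2 V)
        = r * ∑ v, (x.symm (Sum.inl v) : ℕ) := by
    intro x
    rw [edge_sum_eq_dart_sum G (fun v => (x.symm (Sum.inl v) : ℕ)),
      dart_sum_eq_degree_sum G (fun v => (x.symm (Sum.inl v) : ℕ))]
    rw [Finset.mul_sum]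
    exact Finset.sum_congr rfl fun v _ => by rw [h v]
  have hB₀ : ∑ v, (x₀.symm (Sum.inl v) : ℕ) = tri (Fintype.card V) := by
    simp only [hv₀]
    exact sum_equiv_val (Fintype.equivFin V).symm
  have heq₀ : cost G x₀ + r * tri (Fintype.card V)
      = 2 * (Nat.card G.edgeSet * Fintype.card V + tri (Nat.card G.edgeSet)) := by
    have := cost_add_eq G hx₀
    rw [hlift x₀, hB₀, he₀] at this
    exact this
  have hgreat : IsGreatest {c | ∃ x, IsCSeq G x ∧ cost G x = c} (cost G x₀) := by
    constructor
    · exact ⟨x₀, hx₀, rfl⟩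
    · rintro c ⟨y, hy, rfl⟩
      have heqy := cost_add_eq G hy
      rw [hlift y] at heqy
      have htot := pos_total G y
      have htot₀ := pos_total G x₀
      have hE : ∑ e : G.edgeSet, (y.symm (Sum.inr e) : ℕ)
          ≤ Fintype.card V * Nat.card G.edgeSet + tri (Nat.card G.edgeSet) := by
        apply sum_le_of_inj (fun e => (y.symm (Sum.inr e) : ℕ))
        · intro e e' hee
          have := y.symm.injective (Fin.val_injective hee)
          exact Sum.inr_injective this
        · exact hq.symm
        · intro e
          have := (y.symm (Sum.inr e)).isLt
          exact this
      rw [mul_comm (Fintype.card V) (Nat.card G.edgeSet)] at hE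
      rw [hB₀, he₀] at htot₀
      set B := ∑ v, (y.symm (Sum.inl v) : ℕ) with hB
      set E := ∑ e : G.edgeSet, (y.symm (Sum.inr e) : ℕ) with hEdef
      have hBge : tri (Fintype.card V) ≤ B := by omega
      have hrB : r * tri (Fintype.card V) ≤ r * B := Nat.mul_le_mul_left r hBge
      set rB := r * B with hrBdef
      set rT := r * tri (Fintype.card V) with hrTdef
      omega
  rw [maxCost, hgreat.csSup_eq]
  exact heq₀

/-! ### Disjoint unions -/

section Union

variable {V₁ V₂ : Type*} [Fintype V₁] [Fintype V₂]
variable (G₁ : SimpleGraph V₁) (G₂ : SimpleGraph V₂)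
variable [DecidableRel G₁.Adj] [DecidableRel G₂.Adj]

instance sumAdjDecidable : DecidableRel (G₁ ⊕g G₂).Adj := fun u v =>
  match u, v with
  | Sum.inl a, Sum.inl b => (inferInstance : Decidable (G₁.Adj a b))
  | Sum.inr a, Sum.inr b => (inferInstance : Decidable (G₂.Adj a b))
  | Sum.inl _, Sum.inr _ => Decidable.isFalse (by simp)
  | Sum.inr _, Sum.inl _ => Decidable.isFalse (by simp)

/-- The darts of a disjoint union. -/
def sumDartEquiv : (G₁ ⊕g G₂).Dart ≃ G₁.Dart ⊕ G₂.Dart where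
  toFun d := match d with
    | ⟨(Sum.inl u, Sum.inl v), h⟩ => Sum.inl ⟨(u, v), h⟩
    | ⟨(Sum.inr u, Sum.inr v), h⟩ => Sum.inr ⟨(u, v), h⟩
    | ⟨(Sum.inl _, Sum.inr _), h⟩ => absurd h (by simp)
    | ⟨(Sum.inr _, Sum.inl _), h⟩ => absurd h (by simp)
  invFun d := match d with
    | Sum.inl ⟨(u, v), h⟩ => ⟨(Sum.inl u, Sum.inl v), h⟩
    | Sum.inr ⟨(u, v), h⟩ => ⟨(Sum.inr u, Sum.inr v), h⟩
  left_inv := by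
    rintro ⟨⟨u | u, v | v⟩, h⟩
    · rfl
    · exact absurd h (by simp)
    · exact absurd h (by simp)
    · rfl
  right_inv := by rintro (⟨⟨u, v⟩, h⟩ | ⟨⟨u, v⟩, h⟩) <;> rfl

lemma sumDartEquiv_symm_inl (d : G₁.Dart) :
    ((sumDartEquiv G₁ G₂).symm (Sum.inl d)).toProd.1 = Sum.inl d.toProd.1 := by
  obtain ⟨⟨u, v⟩, h⟩ := d
  rfl

lemma sumDartEquiv_symm_inr (d : G₂.Dart) :
    ((sumDartEquiv G₁ G₂).symm (Sum.inr d)).toProd.1 = Sum.inr d.toProd.1 := by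
  obtain ⟨⟨u, v⟩, h⟩ := d
  rfl

lemma sum_dart_sum (f : V₁ ⊕ V₂ → ℕ) :
    ∑ d : (G₁ ⊕g G₂).Dart, f d.toProd.1
      = ∑ d : G₁.Dart, f (Sum.inl d.toProd.1) + ∑ d : G₂.Dart, f (Sum.inr d.toProd.1) := by
  rw [← Equiv.sum_comp (sumDartEquiv G₁ G₂).symm (fun d => f d.toProd.1),
    Fintype.sum_sum_type]
  refine congrArg₂ (· + ·) (Finset.sum_congr rfl fun d _ => ?_)
    (Finset.sum_congr rfl fun d _ => ?_)
  · rw [sumDartEquiv_symm_inl]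
  · rw [sumDartEquiv_symm_inr]

lemma card_edgeSet_sum [Fintype G₁.edgeSet] [Fintype G₂.edgeSet]
    [Fintype (G₁ ⊕g G₂).edgeSet] :
    Nat.card (G₁ ⊕g G₂).edgeSet = Nat.card G₁.edgeSet + Nat.card G₂.edgeSet := by
  have h := two_mul_card_edgeSet (G₁ ⊕g G₂)
  have h1 := two_mul_card_edgeSet G₁
  have h2 := two_mul_card_edgeSet G₂
  have hd : Fintype.card (G₁ ⊕g G₂).Dart = Fintype.card G₁.Dart + Fintype.card G₂.Dart := by
    rw [Fintype.card_congr (sumDartEquiv G₁ G₂), Fintype.card_sum]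
  simp only [Nat.card_eq_fintype_card]
  omega

end Union

lemma regular_handshake (G : SimpleGraph V) [DecidableRel G.Adj] [Fintype G.edgeSet]
    {r : ℕ} (h : G.IsRegularOfDegree r) :
    r * Fintype.card V = 2 * Nat.card G.edgeSet := by
  have h1 := two_mul_card_edgeSet G
  have h2 := dart_sum_eq_degree_sum G (fun _ => 1)
  simp only [Finset.sum_const, Finset.card_univ, smul_eq_mul, mul_one] at h2
  have h3 : ∑ v, G.degree v = r * Fintype.card V := by
    rw [Finset.sum_congr rfl fun v _ => h v, Finset.sum_const, Finset.card_univ, smul_eq_mul,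
      mul_comm]
  rw [Nat.card_eq_fintype_card]
  omega

lemma sum_equivFin_val (α : Type*) [Fintype α] :
    ∑ a, ((Fintype.equivFin α) a : ℕ) = tri (Fintype.card α) := by
  have := sum_equiv_val (Fintype.equivFin α).symm
  simpa using this


section UnionMax

variable {V₁ V₂ : Type*} [Fintype V₁] [Fintype V₂]

lemma maxCost_union (G₁ : SimpleGraph V₁) (G₂ : SimpleGraph V₂)
    [DecidableRel G₁.Adj] [DecidableRel G₂.Adj] {r₁ r₂ : ℕ}
    (h₁ : G₁.IsRegularOfDegree r₁) (h₂ : G₂.IsRegularOfDegree r₂) (hr : r₂ ≤ r₁)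
    [Fintype (G₁ ⊕g G₂).edgeSet] :
    maxCost (G₁ ⊕g G₂) + r₁ * tri (Fintype.card V₁)
      + r₂ * (Fintype.card V₂ * Fintype.card V₁ + tri (Fintype.card V₂))
    = 2 * (Nat.card (G₁ ⊕g G₂).edgeSet * Fintype.card (V₁ ⊕ V₂)
        + tri (Nat.card (G₁ ⊕g G₂).edgeSet)) := by
  set U := G₁ ⊕g G₂ with hU
  set p₁ := Fintype.card V₁
  set p₂ := Fintype.card V₂
  -- the vertex ordering: all of V₁ first, then V₂
  let σU : Fin (Fintype.card (V₁ ⊕ V₂)) ≃ V₁ ⊕ V₂ :=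
    (finCongr (Fintype.card_sum)).trans (finSumFinEquiv.symm.trans
      ((Fintype.equivFin V₁).symm.sumCongr (Fintype.equivFin V₂).symm))
  have hσ1 : ∀ v : V₁, (σU.symm (Sum.inl v) : ℕ) = ((Fintype.equivFin V₁) v : ℕ) := by
    intro v
    simp [σU, Equiv.symm_trans_apply, finSumFinEquiv_apply_left]
  have hσ2 : ∀ v : V₂, (σU.symm (Sum.inr v) : ℕ) = p₁ + ((Fintype.equivFin V₂) v : ℕ) := by
    intro v
    simp [σU, Equiv.symm_trans_apply, finSumFinEquiv_apply_right, p₁]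
  obtain ⟨x₀, hx₀, hv₀, he₀⟩ := exists_cseq_s10 U σU
  have hB₁₀ : ∑ v : V₁, (x₀.symm (Sum.inl (Sum.inl v)) : ℕ) = tri p₁ := by
    simp only [hv₀, hσ1]
    exact sum_equivFin_val V₁
  have hB₂₀ : ∑ v : V₂, (x₀.symm (Sum.inl (Sum.inr v)) : ℕ) = p₂ * p₁ + tri p₂ := by
    simp only [hv₀, hσ2]
    rw [Finset.sum_add_distrib, Finset.sum_const, Finset.card_univ, smul_eq_mul,
      sum_equivFin_val V₂]
  -- the lift-sum identity for any sequence
  have hlift : ∀ x : Fin (numElts U) ≃ (V₁ ⊕ V₂) ⊕ U.edgeSet,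
      ∑ e : U.edgeSet,
        Sym2.lift ⟨fun u w => ((x.symm (Sum.inl u) : ℕ) + (x.symm (Sum.inl w) : ℕ)),
          fun u w => by dsimp only; omega⟩ (e : Sym2 (V₁ ⊕ V₂))
        = r₁ * ∑ v : V₁, (x.symm (Sum.inl (Sum.inl v)) : ℕ)
          + r₂ * ∑ v : V₂, (x.symm (Sum.inl (Sum.inr v)) : ℕ) := by
    intro x
    rw [edge_sum_eq_dart_sum U (fun s => (x.symm (Sum.inl s) : ℕ)),
      sum_dart_sum G₁ G₂ (fun s => (x.symm (Sum.inl s) : ℕ)),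
      dart_sum_eq_degree_sum G₁ (fun v => (x.symm (Sum.inl (Sum.inl v)) : ℕ)),
      dart_sum_eq_degree_sum G₂ (fun v => (x.symm (Sum.inl (Sum.inr v)) : ℕ)),
      Finset.mul_sum, Finset.mul_sum]
    congr 1
    · exact Finset.sum_congr rfl fun v _ => by rw [h₁ v]
    · exact Finset.sum_congr rfl fun v _ => by rw [h₂ v]
  have heq₀ : cost U x₀ + r₁ * tri p₁ + r₂ * (p₂ * p₁ + tri p₂)
      = 2 * (Nat.card U.edgeSet * Fintype.card (V₁ ⊕ V₂) + tri (Nat.card U.edgeSet)) := by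
    have h := cost_add_eq U hx₀
    rw [hlift x₀, hB₁₀, hB₂₀, he₀] at h
    omega
  have hgreat : IsGreatest {c | ∃ x, IsCSeq U x ∧ cost U x = c} (cost U x₀) := by
    constructor
    · exact ⟨x₀, hx₀, rfl⟩
    · rintro c ⟨y, hy, rfl⟩
      have heqy := cost_add_eq U hy
      rw [hlift y] at heqy
      have htot := pos_total U y
      have htot₀ := pos_total U x₀
      rw [Fintype.sum_sum_type] at htot htot₀
      rw [hB₁₀, hB₂₀, he₀] at htot₀
      have hE : ∑ e : U.edgeSet, (y.symm (Sum.inr e) : ℕ)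
          ≤ Fintype.card (V₁ ⊕ V₂) * Nat.card U.edgeSet + tri (Nat.card U.edgeSet) := by
        apply sum_le_of_inj (fun e => (y.symm (Sum.inr e) : ℕ))
        · intro e e' hee
          exact Sum.inr_injective (y.symm.injective (Fin.val_injective hee))
        · exact Nat.card_eq_fintype_card.symm
        · intro e
          exact (y.symm (Sum.inr e)).isLt
      rw [mul_comm (Fintype.card (V₁ ⊕ V₂)) (Nat.card U.edgeSet)] at hE
      have hB₁ : tri p₁ ≤ ∑ v : V₁, (y.symm (Sum.inl (Sum.inl v)) : ℕ) :=
        tri_le_sum_of_inj (fun v => (y.symm (Sum.inl (Sum.inl v)) : ℕ))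
          (fun v v' hvv => Sum.inl_injective (Sum.inl_injective
            (y.symm.injective (Fin.val_injective hvv))))
      set B1 := ∑ v : V₁, (y.symm (Sum.inl (Sum.inl v)) : ℕ)
      set B2 := ∑ v : V₂, (y.symm (Sum.inl (Sum.inr v)) : ℕ)
      set E := ∑ e : U.edgeSet, (y.symm (Sum.inr e) : ℕ)
      set T1 := tri p₁
      set B20 := p₂ * p₁ + tri p₂
      set E0 := Nat.card U.edgeSet * Fintype.card (V₁ ⊕ V₂) + tri (Nat.card U.edgeSet)
      -- auxiliary products
      have a1 : r₂ * T1 ≤ r₁ * T1 := Nat.mul_le_mul hr (le_refl T1)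
      have a2 : r₂ * B1 ≤ r₁ * B1 := Nat.mul_le_mul hr (le_refl B1)
      have m4 : r₂ * E ≤ r₂ * E0 := Nat.mul_le_mul (le_refl r₂) hE
      have m5 : (r₁ - r₂) * T1 ≤ (r₁ - r₂) * B1 := Nat.mul_le_mul (le_refl (r₁ - r₂)) hB₁
      have sub1 : (r₁ - r₂) * T1 = r₁ * T1 - r₂ * T1 := Nat.sub_mul r₁ r₂ T1
      have sub2 : (r₁ - r₂) * B1 = r₁ * B1 - r₂ * B1 := Nat.sub_mul r₁ r₂ B1
      have m3 : r₂ * B1 + r₂ * B2 + r₂ * E = r₂ * T1 + r₂ * B20 + r₂ * E0 := by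
        have h' : r₂ * (B1 + B2 + E) = r₂ * (T1 + B20 + E0) := by
          rw [show B1 + B2 + E = T1 + B20 + E0 by omega]
        rw [Nat.mul_add, Nat.mul_add, Nat.mul_add, Nat.mul_add] at h'
        exact h'
      omega
  rw [maxCost, hgreat.csSup_eq]
  omega

end UnionMax

/-- Maximum construction cost of the disjoint union of regular graphs of distinct
degrees: `ν*(G₁ ⊔ G₂) = ν*(G₁) + ν*(G₂) + 2q₁(p₂ + q₂)` when `r₁ > r₂`. -/
theorem maxCost_sum_regular {V₁ V₂ : Type*} [Fintype V₁] [Fintype V₂]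
    (G₁ : SimpleGraph V₁) (G₂ : SimpleGraph V₂)
    [DecidableRel G₁.Adj] [DecidableRel G₂.Adj] (r₁ r₂ : ℕ)
    (h₁ : G₁.IsRegularOfDegree r₁) (h₂ : G₂.IsRegularOfDegree r₂) (hr : r₂ < r₁) :
    maxCost (G₁ ⊕g G₂) =
      maxCost G₁ + maxCost G₂ +
        2 * Nat.card G₁.edgeSet * (Fintype.card V₂ + Nat.card G₂.edgeSet) := by
  haveI : Fintype G₁.edgeSet := Fintype.ofFinite _
  haveI : Fintype G₂.edgeSet := Fintype.ofFinite _
  haveI : Fintype (G₁ ⊕g G₂).edgeSet := Fintype.ofFinite _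
  set p₁ := Fintype.card V₁ with hp₁
  set p₂ := Fintype.card V₂ with hp₂
  set q₁ := Nat.card G₁.edgeSet with hq₁
  set q₂ := Nat.card G₂.edgeSet with hq₂
  have hA1 := maxCost_regular G₁ h₁
  have hA2 := maxCost_regular G₂ h₂
  have hUq : Nat.card (G₁ ⊕g G₂).edgeSet = q₁ + q₂ := card_edgeSet_sum G₁ G₂
  have hUp : Fintype.card (V₁ ⊕ V₂) = p₁ + p₂ := Fintype.card_sum
  have hU := maxCost_union G₁ G₂ h₁ h₂ hr.le
  rw [hUq, hUp] at hU
  have hh2 : r₂ * p₂ = 2 * q₂ := regular_handshake G₂ h₂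
  have htriq : tri (q₁ + q₂) = tri q₁ + tri q₂ + q₁ * q₂ := tri_add q₁ q₂
  -- pass to integers and finish by linear combination
  have hA1' : (maxCost G₁ : ℤ) + r₁ * tri p₁ = 2 * (q₁ * p₁ + tri q₁) := by
    exact_mod_cast hA1
  have hA2' : (maxCost G₂ : ℤ) + r₂ * tri p₂ = 2 * (q₂ * p₂ + tri q₂) := by
    exact_mod_cast hA2
  have hU' : (maxCost (G₁ ⊕g G₂) : ℤ) + r₁ * tri p₁ + r₂ * (p₂ * p₁ + tri p₂)
      = 2 * ((q₁ + q₂) * (p₁ + p₂) + tri (q₁ + q₂)) := by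
    exact_mod_cast hU
  have hh2' : (r₂ : ℤ) * p₂ = 2 * q₂ := by exact_mod_cast hh2
  have htriq' : (tri (q₁ + q₂) : ℤ) = tri q₁ + tri q₂ + q₁ * q₂ := by exact_mod_cast htriq
  have hgoal : (maxCost (G₁ ⊕g G₂) : ℤ)
      = maxCost G₁ + maxCost G₂ + 2 * q₁ * (p₂ + q₂) := by
    linear_combination hU' - hA1' - hA2' - (p₁ : ℤ) * hh2' + 2 * htriq'
  exact_mod_cast hgoal

end ConsCost
end
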